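/- arXiv:2110.05711 — 8 statements merged into one kernel-verified Lean document; each statement's English description precedes it below -/
import Mathlib

section
/- If the map D : V₀ → V₁ is bijective, then (V, d) is acyclic, i.e. ker d = d(V): every x ∈ V with d x = 0 lies in the image of d. -/
/-- Setup: `V` a `K`-vector space with differential `d` (`d ∘ d = 0`),
`V₁ ⊆ V` a `d`-invariant subspace, `V₀` a complement, `π₀, π₁` the projections onto
`V₀` and `V₁`, and `D = π₁ ∘ d : V₀ → V₁`.  If `D` is bijective (injective on `V₀` and
surjective onto `V₁`), then `(V, d)` is acyclic: `ker d = d(V)`. -/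
theorem acyclic_of_D_bijective
    {K V : Type*} [Field K] [AddCommGroup V] [Module K V]
    (d : V →ₗ[K] V) (hdd : ∀ x : V, d (d x) = 0)
    (V₀ V₁ : Submodule K V) (hcompl : IsCompl V₀ V₁)
    (hdV₁ : ∀ x ∈ V₁, d x ∈ V₁)
    (π₀ π₁ : V →ₗ[K] V)
    (hπ₀ : ∀ x : V, π₀ x ∈ V₀) (hπ₁ : ∀ x : V, π₁ x ∈ V₁)
    (hπ : ∀ x : V, π₀ x + π₁ x = x)
    (hDinj : ∀ x ∈ V₀, π₁ (d x) = 0 → x = 0)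
    (hDsurj : ∀ y ∈ V₁, ∃ x ∈ V₀, π₁ (d x) = y) :
    LinearMap.ker d = LinearMap.range d := by
  ext x
  simp only [LinearMap.mem_ker, LinearMap.mem_range]
  constructor
  · intro hx
    obtain ⟨w, hw, hwd⟩ := hDsurj (π₁ x) (hπ₁ x)
    have hy0 : x - d w ∈ V₀ := by
      have h1 := hπ x
      have h2 := hπ (d w)
      rw [hwd] at h2
      have : x - d w = π₀ x - π₀ (d w) := by
        conv_lhs => rw [← h1, ← h2]
        abel
      rw [this]
      exact Submodule.sub_mem _ (hπ₀ x) (hπ₀ (d w))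
    have hdy : d (x - d w) = 0 := by
      rw [map_sub, hx, hdd, sub_zero]
    have := hDinj _ hy0 (by rw [hdy, map_zero])
    exact ⟨w, (sub_eq_zero.mp this).symm⟩
  · rintro ⟨y, rfl⟩
    exact hdd y
end

section
/- Assume D : V₀ → V₁ is bijective. If x₀ ∈ V₀ and x₁ ∈ V₁ satisfy d(x₀ + x₁) = 0, then x₀ = d₀(D⁻¹ x₁) and x₀ + x₁ = d(D⁻¹ x₁); in particular every cocycle of (V, d) is the coboundary of an explicitly given element. -/
/-- Setup: `V` a `K`-vector space with differential `d` (`d ∘ d = 0`),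
`V₁ ⊆ V` a `d`-invariant subspace, `V₀` a complement, `π₀, π₁` the projections onto
`V₀` and `V₁`, and `D = π₁ ∘ d : V₀ → V₁`.  Assume `D` is bijective.  If `x₀ ∈ V₀` and
`x₁ ∈ V₁` satisfy `d (x₀ + x₁) = 0`, then, writing `w ∈ V₀` for the preimage `D⁻¹ x₁`
(i.e. `π₁ (d w) = x₁`), one has `x₀ = d₀ (D⁻¹ x₁) = π₀ (d w)` and
`x₀ + x₁ = d (D⁻¹ x₁) = d w`; in particular every cocycle of `(V, d)` is the
coboundary of an explicitly given element. -/
theorem cocycle_is_explicit_coboundary_of_D_bijective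
    {K V : Type*} [Field K] [AddCommGroup V] [Module K V]
    (d : V →ₗ[K] V) (hdd : ∀ x : V, d (d x) = 0)
    (V₀ V₁ : Submodule K V) (hcompl : IsCompl V₀ V₁)
    (hdV₁ : ∀ x ∈ V₁, d x ∈ V₁)
    (π₀ π₁ : V →ₗ[K] V)
    (hπ₀ : ∀ x : V, π₀ x ∈ V₀) (hπ₁ : ∀ x : V, π₁ x ∈ V₁)
    (hπ : ∀ x : V, π₀ x + π₁ x = x)
    (hDinj : ∀ x ∈ V₀, π₁ (d x) = 0 → x = 0)
    (hDsurj : ∀ y ∈ V₁, ∃ x ∈ V₀, π₁ (d x) = y) :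
    ∀ x₀ ∈ V₀, ∀ x₁ ∈ V₁, d (x₀ + x₁) = 0 →
      ∀ w ∈ V₀, π₁ (d w) = x₁ →
        x₀ = π₀ (d w) ∧ x₀ + x₁ = d w := by
  intro x₀ hx₀ x₁ hx₁ hd w hw hπ₁dw
  -- u := x₀ - π₀ (d w) lies in V₀ and d u = 0
  have hdw : π₀ (d w) + x₁ = d w := by rw [← hπ₁dw]; exact hπ (d w)
  have hu0 : x₀ - π₀ (d w) ∈ V₀ := V₀.sub_mem hx₀ (hπ₀ (d w))
  have hdπ : d (π₀ (d w)) = - d x₁ := by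
    have := congrArg d hdw
    rw [map_add, hdd] at this
    exact eq_neg_of_add_eq_zero_left this
  have hdu : d (x₀ - π₀ (d w)) = 0 := by
    rw [map_sub, hdπ, sub_neg_eq_add, ← map_add, hd]
  have hzero : x₀ - π₀ (d w) = 0 := hDinj _ hu0 (by rw [hdu, map_zero])
  have h1 : x₀ = π₀ (d w) := sub_eq_zero.mp hzero
  exact ⟨h1, by rw [h1, hdw]⟩
end

section
/- If D : V₀ → V₁ is surjective, then the inclusion of ker D (which is d-invariant, with differential d₀) into (V, d) is a quasi-isomorphism; concretely: (i) for every x ∈ V with d x = 0 there exist y ∈ ker D with d y = 0 and z ∈ V such that x = y + d z; and (ii) if y ∈ ker D satisfies d y = 0 and y ∈ d(V), then y ∈ d(ker D). -/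
/-- Setup: `V` a `K`-vector space with differential `d` (`d ∘ d = 0`),
`V₁ ⊆ V` a `d`-invariant subspace, `V₀` a complement, `π₀, π₁` the projections onto
`V₀` and `V₁`, and `D = π₁ ∘ d : V₀ → V₁`.  If `D` is surjective, then the inclusion of
`ker D = {x ∈ V₀ : π₁ (d x) = 0}` (which is `d`-invariant, with differential `d₀`) into
`(V, d)` is a quasi-isomorphism; concretely:
(i) every cocycle of `V` is a cocycle of `ker D` plus a coboundary, and
(ii) a cocycle of `ker D` that is a coboundary in `V` is a coboundary in `ker D`. -/
theorem kerD_inclusion_quasi_iso_of_D_surjective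
    {K V : Type*} [Field K] [AddCommGroup V] [Module K V]
    (d : V →ₗ[K] V) (hdd : ∀ x : V, d (d x) = 0)
    (V₀ V₁ : Submodule K V) (hcompl : IsCompl V₀ V₁)
    (hdV₁ : ∀ x ∈ V₁, d x ∈ V₁)
    (π₀ π₁ : V →ₗ[K] V)
    (hπ₀ : ∀ x : V, π₀ x ∈ V₀) (hπ₁ : ∀ x : V, π₁ x ∈ V₁)
    (hπ : ∀ x : V, π₀ x + π₁ x = x)
    (hDsurj : ∀ y ∈ V₁, ∃ x ∈ V₀, π₁ (d x) = y) :
    (∀ x : V, d x = 0 →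
      ∃ y z : V, y ∈ V₀ ∧ π₁ (d y) = 0 ∧ d y = 0 ∧ x = y + d z) ∧
    (∀ y : V, y ∈ V₀ → π₁ (d y) = 0 → d y = 0 → (∃ z : V, d z = y) →
      ∃ w : V, w ∈ V₀ ∧ π₁ (d w) = 0 ∧ d w = y) := by
  -- π₁ vanishes on V₀
  have hπ₁V₀ : ∀ x ∈ V₀, π₁ x = 0 := by
    intro x hx
    have h1 : π₁ x ∈ V₀ := by
      have : π₁ x = x - π₀ x := by
        rw [eq_sub_iff_add_eq, add_comm]; exact hπ x
      rw [this]; exact Submodule.sub_mem _ hx (hπ₀ x)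
    exact (Submodule.disjoint_def.mp hcompl.disjoint.symm) _ (hπ₁ x) h1
  have hmemV₀ : ∀ x : V, π₁ x = 0 → x ∈ V₀ := by
    intro x hx
    have := hπ x
    rw [hx, add_zero] at this
    rw [← this]; exact hπ₀ x
  constructor
  · intro x hx
    obtain ⟨a, ha, hda⟩ := hDsurj (π₁ x) (hπ₁ x)
    refine ⟨x - d a, a, ?_, ?_, ?_, by abel⟩
    · apply hmemV₀
      rw [map_sub, hda, sub_self]
    · have : d (x - d a) = 0 := by rw [map_sub, hx, hdd, sub_self]
      rw [this, map_zero]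
    · rw [map_sub, hx, hdd, sub_self]
  · intro y hy hπdy hdy ⟨z, hz⟩
    obtain ⟨a, ha, hda⟩ := hDsurj (π₁ z) (hπ₁ z)
    refine ⟨z - d a, ?_, ?_, ?_⟩
    · apply hmemV₀
      rw [map_sub, hda, sub_self]
    · rw [map_sub, hdd, sub_zero, hz]
      exact hπ₁V₀ y hy
    · rw [map_sub, hdd, sub_zero, hz]
end

section
/- If D : V₀ → V₁ is injective, then the quotient map from (V, d) to V/(V₀ ⊕ D(V₀)) (with the differential induced by d, which is well defined since V₀ + d(V₀) = V₀ ⊕ D(V₀) is d-invariant) is a quasi-isomorphism; concretely, writing S := V₀ ⊕ D(V₀): (i) for every x ∈ V with d x ∈ S there exists s ∈ S with d(x − s) = 0; and (ii) if x ∈ V satisfies d x = 0 and x ∈ d(V) + S, then x ∈ d(V). -/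
/-- Setup: `V` a `K`-vector space with differential `d` (`d ∘ d = 0`),
`V₁ ⊆ V` a `d`-invariant subspace, `V₀` a complement, `π₀, π₁` the projections onto
`V₀` and `V₁`, and `D = π₁ ∘ d : V₀ → V₁`.  If `D` is injective, then the quotient map
from `(V, d)` to `V/(V₀ ⊕ D(V₀))` is a quasi-isomorphism; concretely, writing
`S := V₀ ⊔ D(V₀)` (which equals `V₀ + d(V₀)` and is `d`-invariant):
(i) every element of `V` whose differential lies in `S` becomes a cocycle after
subtracting an element of `S`, and
(ii) every cocycle of `V` that is a coboundary modulo `S` is a coboundary in `V`. -/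
theorem quotient_quasi_iso_of_D_injective
    {K V : Type*} [Field K] [AddCommGroup V] [Module K V]
    (d : V →ₗ[K] V) (hdd : ∀ x : V, d (d x) = 0)
    (V₀ V₁ : Submodule K V) (hcompl : IsCompl V₀ V₁)
    (hdV₁ : ∀ x ∈ V₁, d x ∈ V₁)
    (π₀ π₁ : V →ₗ[K] V)
    (hπ₀ : ∀ x : V, π₀ x ∈ V₀) (hπ₁ : ∀ x : V, π₁ x ∈ V₁)
    (hπ : ∀ x : V, π₀ x + π₁ x = x)
    (hDinj : ∀ x ∈ V₀, π₁ (d x) = 0 → x = 0) :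
    (∀ x : V, d x ∈ V₀ ⊔ Submodule.map (π₁ ∘ₗ d) V₀ →
      ∃ s ∈ V₀ ⊔ Submodule.map (π₁ ∘ₗ d) V₀, d (x - s) = 0) ∧
    (∀ x : V, d x = 0 →
      (∃ z : V, ∃ s ∈ V₀ ⊔ Submodule.map (π₁ ∘ₗ d) V₀, x = d z + s) →
      ∃ z : V, d z = x) := by
  have hdisj : ∀ y : V, y ∈ V₀ → y ∈ V₁ → y = 0 := fun y h0 h1 =>
    Submodule.disjoint_def.mp hcompl.disjoint y h0 h1
  -- π₁ vanishes on V₀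
  have hπ₁V₀ : ∀ a ∈ V₀, π₁ a = 0 := by
    intro a ha
    have h0 : π₁ a ∈ V₀ := by
      have : π₁ a = a - π₀ a := eq_sub_of_add_eq' (hπ a)
      rw [this]; exact Submodule.sub_mem _ ha (hπ₀ a)
    exact hdisj _ h0 (hπ₁ a)
  -- π₁ is the identity on V₁
  have hπ₁V₁ : ∀ v ∈ V₁, π₁ v = v := by
    intro v hv
    have h1 : π₀ v ∈ V₁ := by
      have : π₀ v = v - π₁ v := eq_sub_of_add_eq (hπ v)
      rw [this]; exact Submodule.sub_mem _ hv (hπ₁ v)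
    have h0 : π₀ v = 0 := hdisj _ (hπ₀ v) h1
    have := hπ v; rw [h0, zero_add] at this; exact this
  constructor
  · -- part (i)
    intro x hd
    rcases Submodule.mem_sup.mp hd with ⟨a, ha, w, hw, hsum⟩
    rcases Submodule.mem_map.mp hw with ⟨b, hb, rfl⟩
    simp only [LinearMap.comp_apply] at hsum
    set x₀ := π₀ x with hx₀def
    set x₁ := π₁ x with hx₁def
    have hx : x = x₀ + x₁ := (hπ x).symm
    have hdx₁V₁ : d x₁ ∈ V₁ := hdV₁ _ (hπ₁ x)
    set c : V := b - x₀ with hcdef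
    have hcV₀ : c ∈ V₀ := Submodule.sub_mem _ hb (hπ₀ x)
    -- compare π₁-components of d x
    have key : d x₁ = π₁ (d c) := by
      have h1 : π₁ (d x) = π₁ (d x₀) + d x₁ := by
        have : d x = d x₀ + d x₁ := by rw [← map_add, hπ x]
        rw [this, map_add, hπ₁V₁ _ hdx₁V₁]
      have h2 : π₁ (d x) = π₁ (d b) := by
        rw [← hsum, map_add, hπ₁V₀ _ ha, zero_add, hπ₁V₁ _ (hπ₁ (d b))]
      have : d c = d b - d x₀ := by rw [hcdef, map_sub]
      rw [this, map_sub]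
      have h3 : π₁ (d x₀) + d x₁ = π₁ (d b) := h1.symm.trans h2
      exact eq_sub_of_add_eq' h3
    -- d (π₁ (d c)) = 0 since π₁ (d c) = d x₁
    have hd1 : d (π₁ (d c)) = 0 := by rw [← key, hdd]
    -- hence d (π₀ (d c)) = 0
    have hd0 : d (π₀ (d c)) = 0 := by
      have hsplit : d c = π₀ (d c) + π₁ (d c) := (hπ (d c)).symm
      have : d (d c) = d (π₀ (d c)) + d (π₁ (d c)) := by
        rw [← map_add, ← hsplit]
      rw [hdd, hd1, add_zero] at this
      exact this.symm
    -- injectivity gives π₀ (d c) = 0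
    have hπ₀dc : π₀ (d c) = 0 := by
      apply hDinj _ (hπ₀ (d c))
      rw [hd0, map_zero]
    have hdc : d c = d x₁ := by
      have hsplit : d c = π₀ (d c) + π₁ (d c) := (hπ (d c)).symm
      rw [hsplit, hπ₀dc, zero_add, ← key]
    refine ⟨x₀ + c, ?_, ?_⟩
    · exact Submodule.mem_sup_left (Submodule.add_mem _ (hπ₀ x) hcV₀)
    · have : d x = d x₀ + d x₁ := by rw [← map_add, hπ x]
      rw [map_sub, this, map_add, hdc]
      abel
  · -- part (ii)
    rintro x hx ⟨z, s, hs, hxz⟩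
    rcases Submodule.mem_sup.mp hs with ⟨a, ha, w, hw, hsum⟩
    rcases Submodule.mem_map.mp hw with ⟨b, hb, rfl⟩
    simp only [LinearMap.comp_apply] at hsum
    set a' : V := a - π₀ (d b) with ha'def
    have ha'V₀ : a' ∈ V₀ := Submodule.sub_mem _ ha (hπ₀ (d b))
    have hx' : x = d (z + b) + a' := by
      have hb' : π₁ (d b) = d b - π₀ (d b) := by
        exact eq_sub_of_add_eq' (hπ (d b))
      rw [hxz, ← hsum, hb', map_add, ha'def]
      abel
    have hda' : d a' = 0 := by
      have : d x = d (d (z + b)) + d a' := by rw [hx', map_add]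
      rw [hx, hdd] at this
      simpa using this.symm
    have : a' = 0 := hDinj _ ha'V₀ (by rw [hda', map_zero])
    exact ⟨z + b, by rw [hx', this, add_zero]⟩
end

section
/- The image of the linear map δ : ⊕_{j ∈ Fin n} L_j → L, δ(F_0, …, F_{n−1}) = Σ_j ⁅F_j, x_j⁆, is exactly the multilinear subspace M ⊆ L; in particular δ is surjective onto the multilinear part of the free Lie algebra. -/
/-- The Lie algebra endomorphism of the free Lie algebra on `Fin n` over `ℚ` sending
`x_j ↦ t • x_j` and `x_i ↦ x_i` for `i ≠ j`. -/
noncomputable def scaleLie (n : ℕ) (j : Fin n) (t : ℚ) :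
    FreeLieAlgebra ℚ (Fin n) →ₗ⁅ℚ⁆ FreeLieAlgebra ℚ (Fin n) :=
  FreeLieAlgebra.lift ℚ
    (fun i => if i = j then t • FreeLieAlgebra.of ℚ i else FreeLieAlgebra.of ℚ i)

/-- The multilinear part `M` of the free Lie algebra on `Fin n` over `ℚ`: elements `F`
with `s_{j,t} F = t • F` for all `j ∈ Fin n` and all `t ∈ ℚ`. -/
noncomputable def lieMultilinear (n : ℕ) : Submodule ℚ (FreeLieAlgebra ℚ (Fin n)) where
  carrier := {F | ∀ (j : Fin n) (t : ℚ), scaleLie n j t F = t • F}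
  add_mem' := by
    intro a b ha hb j t
    rw [map_add, ha j t, hb j t, smul_add]
  zero_mem' := by
    intro j t
    simp
  smul_mem' := by
    intro c a ha j t
    rw [map_smul, ha j t, smul_comm]

/-- The subspace `L_j`: the multilinear part of the free Lie algebra on the generators
other than `x_j`, i.e. elements `F` with `s_{j,t} F = F` for all `t` and
`s_{i,t} F = t • F` for all `i ≠ j` and all `t`. -/
noncomputable def lieMultilinearAvoiding (n : ℕ) (j : Fin n) :
    Submodule ℚ (FreeLieAlgebra ℚ (Fin n)) where
  carrier := {F | (∀ t : ℚ, scaleLie n j t F = F) ∧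
    ∀ i : Fin n, i ≠ j → ∀ t : ℚ, scaleLie n i t F = t • F}
  add_mem' := by
    rintro a b ⟨ha1, ha2⟩ ⟨hb1, hb2⟩
    exact ⟨fun t => by rw [map_add, ha1 t, hb1 t],
      fun i hij t => by rw [map_add, ha2 i hij t, hb2 i hij t, smul_add]⟩
  zero_mem' := ⟨fun t => by simp, fun i hij t => by simp⟩
  smul_mem' := by
    rintro c a ⟨ha1, ha2⟩
    exact ⟨fun t => by rw [map_smul, ha1 t],
      fun i hij t => by rw [map_smul, ha2 i hij t, smul_comm]⟩

/-- The linear map `δ : ⊕_{j ∈ Fin n} L_j → L`, `(F_0, …, F_{n−1}) ↦ Σ_j ⁅F_j, x_j⁆`. -/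
noncomputable def lieDelta (n : ℕ) :
    ((j : Fin n) → lieMultilinearAvoiding n j) →ₗ[ℚ] FreeLieAlgebra ℚ (Fin n) where
  toFun F := ∑ j : Fin n, ⁅(F j : FreeLieAlgebra ℚ (Fin n)), FreeLieAlgebra.of ℚ j⁆
  map_add' F G := by
    simp only [Pi.add_apply, Submodule.coe_add, add_lie]
    rw [Finset.sum_add_distrib]
  map_smul' c F := by
    simp only [Pi.smul_apply, SetLike.val_smul, smul_lie, RingHom.id_apply]
    rw [Finset.smul_sum]

/-! ### Auxiliary machinery -/

section Aux

open FreeLieAlgebra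

lemma mem_lieMultilinear_iff {n : ℕ} {F : FreeLieAlgebra ℚ (Fin n)} :
    F ∈ lieMultilinear n ↔ ∀ (j : Fin n) (t : ℚ), scaleLie n j t F = t • F := Iff.rfl

lemma mem_lieMultilinearAvoiding_iff {n : ℕ} {j : Fin n} {F : FreeLieAlgebra ℚ (Fin n)} :
    F ∈ lieMultilinearAvoiding n j ↔ (∀ t : ℚ, scaleLie n j t F = F) ∧
      ∀ i : Fin n, i ≠ j → ∀ t : ℚ, scaleLie n i t F = t • F := Iff.rfl

/-- Lie monomials in the generators, with their multidegree. -/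
inductive LieMono (n : ℕ) : (Fin n → ℕ) → FreeLieAlgebra ℚ (Fin n) → Prop
  | of (j : Fin n) : LieMono n (Pi.single j 1) (FreeLieAlgebra.of ℚ j)
  | lie {d e : Fin n → ℕ} {a b : FreeLieAlgebra ℚ (Fin n)} :
      LieMono n d a → LieMono n e b → LieMono n (d + e) ⁅a, b⁆

lemma scaleLie_of (n : ℕ) (j i : Fin n) (t : ℚ) :
    scaleLie n j t (FreeLieAlgebra.of ℚ i) =
      if i = j then t • FreeLieAlgebra.of ℚ i else FreeLieAlgebra.of ℚ i :=
  FreeLieAlgebra.lift_of_apply _ _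

lemma scaleLie_sum {n : ℕ} (j : Fin n) (t : ℚ) {ι : Type*} (s : Finset ι)
    (f : ι → FreeLieAlgebra ℚ (Fin n)) :
    scaleLie n j t (∑ i ∈ s, f i) = ∑ i ∈ s, scaleLie n j t (f i) := by
  rw [← LieHom.coe_toLinearMap, map_sum]

lemma LieMono.scale {n : ℕ} {d : Fin n → ℕ} {w : FreeLieAlgebra ℚ (Fin n)}
    (h : LieMono n d w) (j : Fin n) (t : ℚ) : scaleLie n j t w = t ^ d j • w := by
  induction h with
  | of i =>
    rw [scaleLie_of]
    by_cases hij : i = j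
    · subst hij; simp
    · simp [hij, Pi.single_eq_of_ne hij]
  | lie ha hb iha ihb =>
    rw [LieHom.map_lie, iha, ihb, smul_lie, lie_smul, smul_smul, ← pow_add, Pi.add_apply]

/-- Every element of the free Lie algebra is a `ℚ`-linear combination of Lie monomials. -/
lemma span_lieMono_top (n : ℕ) :
    Submodule.span ℚ {w : FreeLieAlgebra ℚ (Fin n) | ∃ d, LieMono n d w} = ⊤ := by
  set s : Set (FreeLieAlgebra ℚ (Fin n)) := {w | ∃ d, LieMono n d w} with hs
  have hlie : ∀ x ∈ Submodule.span ℚ s, ∀ y ∈ Submodule.span ℚ s,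
      ⁅x, y⁆ ∈ Submodule.span ℚ s := by
    intro x hx y hy
    induction hx, hy using Submodule.span_induction₂ with
    | mem_mem x y hx hy =>
      obtain ⟨d, hd⟩ := hx; obtain ⟨e, he⟩ := hy
      exact Submodule.subset_span ⟨d + e, hd.lie he⟩
    | zero_left y hy => simp
    | zero_right x hx => simp
    | add_left x y z hx hy hz h1 h2 => rw [add_lie]; exact add_mem h1 h2
    | add_right x y z hx hy hz h1 h2 => rw [lie_add]; exact add_mem h1 h2
    | smul_left r x y hx hy h1 => rw [smul_lie]; exact Submodule.smul_mem _ _ h1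
    | smul_right r x y hx hy h1 => rw [lie_smul]; exact Submodule.smul_mem _ _ h1
  let K : LieSubalgebra ℚ (FreeLieAlgebra ℚ (Fin n)) :=
    { Submodule.span ℚ s with lie_mem' := fun {x y} hx hy => hlie x hx y hy }
  have hofK : ∀ j : Fin n, FreeLieAlgebra.of ℚ j ∈ K := fun j =>
    Submodule.subset_span ⟨Pi.single j 1, LieMono.of j⟩
  have key : ∀ x : FreeLieAlgebra ℚ (Fin n), x ∈ K := by
    let f : FreeLieAlgebra ℚ (Fin n) →ₗ⁅ℚ⁆ K :=
      FreeLieAlgebra.lift ℚ (fun j => ⟨FreeLieAlgebra.of ℚ j, hofK j⟩)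
    have hcomp : K.incl.comp f = LieHom.id := by
      apply FreeLieAlgebra.hom_ext
      intro x
      simp [f, FreeLieAlgebra.lift_of_apply]
    intro x
    have hx := LieHom.congr_fun hcomp x
    simp only [LieHom.comp_apply, LieHom.id_apply] at hx
    rw [← hx]
    exact (f x).2
  rw [Submodule.eq_top_iff']
  exact key

/-- Vandermonde-type separation of weights in a `ℚ`-vector space. -/
lemma vandermonde_sep {M : Type*} [AddCommGroup M] [Module ℚ M] (K : Finset ℕ) (G : ℕ → M)
    (h : ∀ t : ℚ, ∑ k ∈ K, t ^ k • G k = 0) : ∀ k ∈ K, G k = 0 := by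
  intro k0 hk0
  rw [← Module.forall_dual_apply_eq_zero_iff ℚ]
  intro φ
  have hq : (∑ k ∈ K, Polynomial.C (φ (G k)) * Polynomial.X ^ k) = (0 : Polynomial ℚ) := by
    apply Polynomial.funext
    intro t
    have h2 := congrArg φ (h t)
    simp only [map_sum, map_smul, map_zero, smul_eq_mul] at h2
    simp only [Polynomial.eval_finset_sum, Polynomial.eval_mul, Polynomial.eval_C,
      Polynomial.eval_pow, Polynomial.eval_X, Polynomial.eval_zero]
    rw [← h2]
    exact Finset.sum_congr rfl fun k _ => mul_comm _ _
  have hc := congrArg (fun p : Polynomial ℚ => p.coeff k0) hq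
  simp only [Polynomial.finset_sum_coeff, Polynomial.coeff_C_mul, Polynomial.coeff_X_pow,
    mul_ite, mul_one, mul_zero, Finset.sum_ite_eq K k0, hk0, if_true,
    Polynomial.coeff_zero] at hc
  exact hc

lemma lieDelta_single {n : ℕ} (j : Fin n) (x : lieMultilinearAvoiding n j) :
    lieDelta n (Pi.single j x) =
      ⁅(x : FreeLieAlgebra ℚ (Fin n)), FreeLieAlgebra.of ℚ j⁆ := by
  classical
  show (∑ j' : Fin n,
      ⁅(((Pi.single j x : ∀ i, lieMultilinearAvoiding n i) j' :
          lieMultilinearAvoiding n j') : FreeLieAlgebra ℚ (Fin n)),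
        FreeLieAlgebra.of ℚ j'⁆) = _
  rw [Finset.sum_eq_single j]
  · rw [Pi.single_eq_same]
  · intro j' _ hj'
    rw [Pi.single_eq_of_ne hj', ZeroMemClass.coe_zero, zero_lie]
  · intro h; exact absurd (Finset.mem_univ j) h

/-- A bracket of two Lie monomials whose multidegrees sum to `(1, …, 1)` lies in the
range of `lieDelta`. -/
lemma lie_mono_mem_range {n : ℕ} {e : Fin n → ℕ} {b : FreeLieAlgebra ℚ (Fin n)}
    (hb : LieMono n e b) :
    ∀ {d : Fin n → ℕ} {a : FreeLieAlgebra ℚ (Fin n)}, LieMono n d a →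
      (∀ i, d i + e i = 1) → ⁅a, b⁆ ∈ LinearMap.range (lieDelta n) := by
  induction hb with
  | of j =>
    intro d a ha hsum
    have hdj : d j = 0 := by
      have := hsum j; simp at this; omega
    have hdi : ∀ i, i ≠ j → d i = 1 := by
      intro i hij
      have := hsum i
      rwa [Pi.single_eq_of_ne hij, add_zero] at this
    have haL : a ∈ lieMultilinearAvoiding n j := by
      rw [mem_lieMultilinearAvoiding_iff]
      constructor
      · intro t; rw [ha.scale j t, hdj, pow_zero, one_smul]
      · intro i hij t; rw [ha.scale i t, hdi i hij, pow_one]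
    exact ⟨Pi.single j ⟨a, haL⟩, lieDelta_single j ⟨a, haL⟩⟩
  | lie h1 h2 ih1 ih2 =>
    intro d a ha hsum
    rw [leibniz_lie]
    refine add_mem (ih2 (ha.lie h1) fun i => ?_) ?_
    · have := hsum i; simp only [Pi.add_apply] at this ⊢; omega
    · rw [← lie_skew]
      refine neg_mem (ih1 (ha.lie h2) fun i => ?_)
      have := hsum i; simp only [Pi.add_apply] at this ⊢; omega

/-- Refinement step: if `F` is in the span of monomials satisfying `P` and is scaled
linearly by `s_{j,t}`, then `F` is in the span of those monomials whose `j`-degree is 1. -/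
lemma refine_step {n : ℕ} (P : (Fin n → ℕ) → Prop) (j : Fin n)
    {F : FreeLieAlgebra ℚ (Fin n)}
    (hF : F ∈ Submodule.span ℚ {w : FreeLieAlgebra ℚ (Fin n) | ∃ d, LieMono n d w ∧ P d})
    (hFm : ∀ t : ℚ, scaleLie n j t F = t • F) :
    F ∈ Submodule.span ℚ
      {w : FreeLieAlgebra ℚ (Fin n) | ∃ d, LieMono n d w ∧ P d ∧ d j = 1} := by
  classical
  obtain ⟨c, hsupp, hsum⟩ := Submodule.mem_span_set.mp hF
  have hexists : ∀ w ∈ c.support, ∃ d, LieMono n d w ∧ P d := fun w hw => hsupp hw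
  choose! deg hmono hP using hexists
  rw [Finsupp.sum] at hsum
  set T := c.support with hT
  set Fk : ℕ → FreeLieAlgebra ℚ (Fin n) :=
    fun k => ∑ w ∈ T.filter (fun w => deg w j = k), c w • w with hFk
  set K : Finset ℕ := insert 1 (T.image (fun w => deg w j)) with hK
  have hmaps : ∀ w ∈ T, deg w j ∈ K := fun w hw =>
    Finset.mem_insert_of_mem (Finset.mem_image_of_mem _ hw)
  have hsum2 : ∀ t : ℚ, ∑ k ∈ K, t ^ k • Fk k = t • F := by
    intro t
    have h1 : ∑ k ∈ K, t ^ k • Fk k = ∑ w ∈ T, t ^ deg w j • (c w • w) := by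
      rw [← Finset.sum_fiberwise_of_maps_to hmaps (fun w => t ^ deg w j • (c w • w))]
      refine Finset.sum_congr rfl fun k _ => ?_
      rw [hFk, Finset.smul_sum]
      refine Finset.sum_congr rfl fun w hw => ?_
      rw [(Finset.mem_filter.mp hw).2]
    have h2 : scaleLie n j t F = ∑ w ∈ T, t ^ deg w j • (c w • w) := by
      rw [← hsum, scaleLie_sum]
      refine Finset.sum_congr rfl fun w hw => ?_
      rw [map_smul, (hmono w hw).scale j t, smul_comm]
    rw [h1, ← h2, hFm t]
  set G : ℕ → FreeLieAlgebra ℚ (Fin n) :=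
    fun k => Fk k - (if k = 1 then F else 0) with hG
  have hzero : ∀ t : ℚ, ∑ k ∈ K, t ^ k • G k = 0 := by
    intro t
    simp only [hG, smul_sub]
    rw [Finset.sum_sub_distrib, hsum2]
    have h3 : ∑ k ∈ K, t ^ k • (if k = 1 then F else 0) = t • F := by
      have h4 : ∀ k ∈ K, t ^ k • (if k = 1 then F else 0)
          = if k = 1 then t ^ 1 • F else 0 := by
        intro k _
        by_cases hk : k = 1 <;> simp [hk]
      rw [Finset.sum_congr rfl h4, Finset.sum_ite_eq' K 1 (fun _ => t ^ 1 • F),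
        if_pos (Finset.mem_insert_self 1 _), pow_one]
    rw [h3, sub_self]
  have hG1 : G 1 = 0 := vandermonde_sep K G hzero 1 (Finset.mem_insert_self 1 _)
  have hF1 : F = Fk 1 := by
    have := hG1
    simp only [hG, if_pos rfl, sub_eq_zero] at this
    exact this.symm
  rw [hF1, hFk]
  refine Submodule.sum_mem _ fun w hw => Submodule.smul_mem _ _ (Submodule.subset_span ?_)
  obtain ⟨hwT, hwj⟩ := Finset.mem_filter.mp hw
  exact ⟨deg w, hmono w hwT, hP w hwT, hwj⟩

lemma multilinear_mem_span {n : ℕ} {F : FreeLieAlgebra ℚ (Fin n)}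
    (hF : F ∈ lieMultilinear n) : ∀ m, m ≤ n →
    F ∈ Submodule.span ℚ {w : FreeLieAlgebra ℚ (Fin n) |
      ∃ d, LieMono n d w ∧ ∀ i : Fin n, (i : ℕ) < m → d i = 1} := by
  intro m
  induction m with
  | zero =>
    intro _
    have hset : {w : FreeLieAlgebra ℚ (Fin n) |
        ∃ d, LieMono n d w ∧ ∀ i : Fin n, (i : ℕ) < 0 → d i = 1}
        = {w | ∃ d, LieMono n d w} := by
      ext w; simp
    rw [hset, span_lieMono_top]
    exact Submodule.mem_top
  | succ m ih =>
    intro hm1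
    have hmn : m < n := lt_of_lt_of_le (Nat.lt_succ_self m) hm1
    set j : Fin n := ⟨m, hmn⟩ with hj
    have step := refine_step (fun d => ∀ i : Fin n, (i : ℕ) < m → d i = 1) j
      (ih (le_of_lt hmn)) (hF j)
    refine Submodule.span_mono ?_ step
    rintro w ⟨d, hd, hPd, hdj⟩
    refine ⟨d, hd, fun i hi => ?_⟩
    rcases Nat.lt_succ_iff_lt_or_eq.mp hi with h | h
    · exact hPd i h
    · have : i = j := Fin.ext h
      rw [this]; exact hdj

end Aux

theorem lieDelta_range_eq_multilinear (n : ℕ) (hn : 2 ≤ n) :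
    LinearMap.range (lieDelta n) = lieMultilinear n := by
  apply le_antisymm
  · rintro F ⟨G, rfl⟩
    rw [mem_lieMultilinear_iff]
    intro j t
    show scaleLie n j t (∑ i : Fin n, ⁅(G i : FreeLieAlgebra ℚ (Fin n)),
      FreeLieAlgebra.of ℚ i⁆) = t • ∑ i : Fin n, ⁅(G i : FreeLieAlgebra ℚ (Fin n)),
      FreeLieAlgebra.of ℚ i⁆
    rw [scaleLie_sum, Finset.smul_sum]
    refine Finset.sum_congr rfl fun i _ => ?_
    rw [LieHom.map_lie, scaleLie_of]
    by_cases hij : i = j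
    · subst hij
      rw [if_pos rfl, ((G i).2 : _ ∈ lieMultilinearAvoiding n i).1 t, lie_smul]
    · rw [if_neg hij, ((G i).2 : _ ∈ lieMultilinearAvoiding n i).2 j
        (fun h => hij h.symm) t, smul_lie]
  · intro F hF
    have h := multilinear_mem_span hF n le_rfl
    refine Submodule.span_le.mpr ?_ h
    rintro w ⟨d, hd, hall⟩
    have hall' : ∀ i, d i = 1 := fun i => hall i i.2
    cases hd with
    | of j =>
      exfalso
      obtain ⟨i, hij⟩ := Fintype.exists_ne_of_one_lt_card
        (by simpa using lt_of_lt_of_le one_lt_two hn) j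
      have h1 := hall' i
      rw [Pi.single_eq_of_ne hij] at h1
      exact zero_ne_one h1
    | lie h1 h2 =>
      exact lie_mono_mem_range h2 h1 fun i => by
        have := hall' i; simpa using this
end

section
/- The kernel of the linear map δ : ⊕_{j ∈ Fin n} L_j → L, δ(F_0, …, F_{n−1}) = Σ_j ⁅F_j, x_j⁆, is a finite-dimensional ℚ-vector space of dimension (n−2)!. -/
namespace LieDeltaProof
open FreeLieAlgebra Submodule

variable {n : ℕ}

attribute [local instance] LieRing.ofAssociativeRing

/-- Left-normed Lie monomial associated to a list of generators; `lnW [] = 0`. -/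
noncomputable def lnW (n : ℕ) : List (Fin n) → FreeLieAlgebra ℚ (Fin n)
  | [] => 0
  | a :: l => l.foldl (fun F z => ⁅F, of ℚ z⁆) (of ℚ a)

@[simp] lemma lnW_nil : lnW n [] = 0 := rfl

@[simp] lemma lnW_single (a : Fin n) : lnW n [a] = of ℚ a := rfl

lemma lnW_append (a : Fin n) (l : List (Fin n)) (z : Fin n) :
    lnW n (a :: (l ++ [z])) = ⁅lnW n (a :: l), of ℚ z⁆ := by
  simp [lnW, List.foldl_append]

lemma scaleLie_of (j : Fin n) (t : ℚ) (i : Fin n) :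
    scaleLie n j t (of ℚ i) = (if i = j then t else 1) • of ℚ i := by
  rw [scaleLie, lift_of_apply]
  split_ifs <;> simp

lemma scaleLie_lnW (j : Fin n) (t : ℚ) (a : Fin n) (l : List (Fin n)) :
    scaleLie n j t (lnW n (a :: l)) = t ^ ((a :: l).count j) • lnW n (a :: l) := by
  induction l using List.reverseRecOn with
  | nil =>
    rw [lnW_single, scaleLie_of]
    by_cases h : a = j <;> simp [h, List.count_cons, List.count_nil]
  | append_singleton l z ih =>
    rw [lnW_append, LieHom.map_lie, ih, scaleLie_of, smul_lie, lie_smul, ← lnW_append,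
      smul_smul]
    congr 1
    rw [show (a :: (l ++ [z])) = (a :: l) ++ [z] from rfl, List.count_append, pow_add]
    by_cases h : z = j
    · simp [h]
    · rw [show List.count j [z] = 0 from
        List.count_eq_zero.mpr (by simpa using fun hh : j = z => h hh.symm), pow_zero, mul_one,
        if_neg h, mul_one]

lemma scaleLie_lnW' (j : Fin n) (t : ℚ) (l : List (Fin n)) :
    scaleLie n j t (lnW n l) = t ^ (l.count j) • lnW n l := by
  cases l with
  | nil => simp
  | cons a l => exact scaleLie_lnW j t a l

/-- Span of left-normed monomials starting with `b` whose remaining letters form the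
multiset `s`. -/
noncomputable def spanB (b : Fin n) (s : Multiset (Fin n)) :
    Submodule ℚ (FreeLieAlgebra ℚ (Fin n)) :=
  Submodule.span ℚ {F | ∃ σ : List (Fin n), (σ : Multiset (Fin n)) = s ∧ F = lnW n (b :: σ)}

lemma lnW_mem_spanB (b : Fin n) (σ : List (Fin n)) :
    lnW n (b :: σ) ∈ spanB b (σ : Multiset (Fin n)) :=
  Submodule.subset_span ⟨σ, rfl, rfl⟩

lemma spanB_bracket_of {b : Fin n} {s : Multiset (Fin n)} {u : FreeLieAlgebra ℚ (Fin n)}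
    (hu : u ∈ spanB b s) (z : Fin n) :
    ⁅u, of ℚ z⁆ ∈ spanB b (s + {z}) := by
  induction hu using Submodule.span_induction with
  | mem x hx =>
    obtain ⟨σ, hσ, rfl⟩ := hx
    rw [← lnW_append]
    exact Submodule.subset_span ⟨σ ++ [z], by rw [← hσ]; rfl, rfl⟩
  | zero => simp [spanB]
  | add x y _ _ hx hy => rw [add_lie]; exact add_mem hx hy
  | smul c x _ hx => rw [smul_lie]; exact smul_mem _ _ hx

lemma spanB_bracket_lnW (b : Fin n) (m : List (Fin n)) :
    ∀ (c : Fin n) (s : Multiset (Fin n)) (u : FreeLieAlgebra ℚ (Fin n)), u ∈ spanB b s →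
      ⁅u, lnW n (c :: m)⁆ ∈ spanB b (s + (c :: m : List (Fin n))) := by
  induction m using List.reverseRecOn with
  | nil =>
    intro c s u hu
    simpa using spanB_bracket_of hu c
  | append_singleton m' z ih =>
    intro c s u hu
    have hms : ((c :: (m' ++ [z]) : List (Fin n)) : Multiset (Fin n))
        = ((c :: m' : List (Fin n)) : Multiset (Fin n)) + {z} := by
      rfl
    rw [lnW_append, leibniz_lie]
    refine add_mem ?_ ?_
    · have h2 := spanB_bracket_of (ih c s u hu) z
      rw [hms, ← add_assoc]
      exact h2
    · rw [← lie_skew]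
      have h2 := ih c _ _ (spanB_bracket_of hu z)
      refine neg_mem ?_
      have : s + {z} + ((c :: m' : List (Fin n)) : Multiset (Fin n))
          = s + ((c :: (m' ++ [z]) : List (Fin n)) : Multiset (Fin n)) := by
        rw [hms, add_assoc, add_comm ({z} : Multiset (Fin n))]
      rwa [this] at h2

lemma lnW_mem_spanB_of_mem (b : Fin n) (l : List (Fin n)) : ∀ (a : Fin n), b ∈ a :: l →
    lnW n (a :: l) ∈ spanB b (((a :: l : List (Fin n)) : Multiset (Fin n)).erase b) := by
  induction l using List.reverseRecOn with
  | nil =>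
    intro a hb
    have hab : b = a := by simpa using hb
    subst hab
    have : (((b :: [] : List (Fin n)) : Multiset (Fin n))).erase b = (([] : List (Fin n)) : Multiset (Fin n)) := by
      simp
    rw [this]
    exact lnW_mem_spanB b []
  | append_singleton l' z ih =>
    intro a hb
    by_cases hbl : b ∈ a :: l'
    · have h2 := spanB_bracket_of (ih a hbl) z
      have hms : (((a :: (l' ++ [z]) : List (Fin n)) : Multiset (Fin n))).erase b
          = ((a :: l' : List (Fin n)) : Multiset (Fin n)).erase b + {z} := by
        rw [show ((a :: (l' ++ [z]) : List (Fin n)) : Multiset (Fin n))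
          = ((a :: l' : List (Fin n)) : Multiset (Fin n)) + {z} from rfl]
        exact Multiset.erase_add_left_pos _ (by exact_mod_cast hbl)
      rw [lnW_append, hms]
      exact h2
    · have hbz : b = z := by
        rcases (by simpa using hb : b = a ∨ b ∈ l' ∨ b = z) with h | h | h
        · exact absurd (by simp [h] : b ∈ a :: l') hbl
        · exact absurd (by simp [h] : b ∈ a :: l') hbl
        · exact h
      subst hbz
      have h0 : lnW n (b :: []) ∈ spanB b (([] : List (Fin n)) : Multiset (Fin n)) :=
        lnW_mem_spanB b []
      have h2 := spanB_bracket_lnW b l' a _ _ h0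
      have hms : (((a :: (l' ++ [b]) : List (Fin n)) : Multiset (Fin n))).erase b
          = (([] : List (Fin n)) : Multiset (Fin n)) + ((a :: l' : List (Fin n)) : Multiset (Fin n)) := by
        rw [show ((a :: (l' ++ [b]) : List (Fin n)) : Multiset (Fin n))
          = ((a :: l' : List (Fin n)) : Multiset (Fin n)) + {b} from rfl]
        rw [Multiset.erase_add_right_pos _ (by simp : b ∈ ({b} : Multiset (Fin n)))]
        simp
      rw [lnW_append, ← lie_skew, hms]
      exact neg_mem h2

lemma span_lnW_bracket_of {u : FreeLieAlgebra ℚ (Fin n)}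
    (hu : u ∈ Submodule.span ℚ (Set.range (lnW n))) (z : Fin n) :
    ⁅u, of ℚ z⁆ ∈ Submodule.span ℚ (Set.range (lnW n)) := by
  induction hu using Submodule.span_induction with
  | mem x hx =>
    obtain ⟨l, rfl⟩ := hx
    cases l with
    | nil => simp
    | cons a l' => rw [← lnW_append]; exact Submodule.subset_span ⟨_, rfl⟩
  | zero => simp
  | add x y _ _ hx hy => rw [add_lie]; exact add_mem hx hy
  | smul r x _ hx => rw [smul_lie]; exact smul_mem _ _ hx

lemma span_lnW_bracket (m : List (Fin n)) : ∀ (c : Fin n) (u : FreeLieAlgebra ℚ (Fin n)),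
    u ∈ Submodule.span ℚ (Set.range (lnW n)) →
    ⁅u, lnW n (c :: m)⁆ ∈ Submodule.span ℚ (Set.range (lnW n)) := by
  induction m using List.reverseRecOn with
  | nil =>
    intro c u hu
    exact span_lnW_bracket_of hu c
  | append_singleton m' z ih =>
    intro c u hu
    rw [lnW_append, leibniz_lie]
    refine add_mem ?_ ?_
    · exact span_lnW_bracket_of (ih c u hu) z
    · rw [← lie_skew]
      exact neg_mem (ih c _ (span_lnW_bracket_of hu z))

lemma span_lnW_top : Submodule.span ℚ (Set.range (lnW n)) = ⊤ := by
  set W := Submodule.span ℚ (Set.range (lnW n)) with hW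
  have hlie : ∀ {x y : FreeLieAlgebra ℚ (Fin n)}, x ∈ W → y ∈ W → ⁅x, y⁆ ∈ W := by
    intro x y hx hy
    induction hy using Submodule.span_induction with
    | mem v hv =>
      obtain ⟨l, rfl⟩ := hv
      cases l with
      | nil => simp
      | cons c m => exact span_lnW_bracket m c x hx
    | zero => simp
    | add a b _ _ ha hb => rw [lie_add]; exact add_mem ha hb
    | smul r a _ ha => rw [lie_smul]; exact smul_mem _ _ ha
  let K : LieSubalgebra ℚ (FreeLieAlgebra ℚ (Fin n)) :=
    { W with lie_mem' := fun hx hy => hlie hx hy }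
  have hKW : ∀ x, x ∈ K ↔ x ∈ W := fun x => Iff.rfl
  have hofK : ∀ i : Fin n, of ℚ i ∈ K := fun i =>
    (hKW _).mpr (Submodule.subset_span ⟨[i], rfl⟩)
  let g : FreeLieAlgebra ℚ (Fin n) →ₗ⁅ℚ⁆ K :=
    FreeLieAlgebra.lift ℚ (fun i => (⟨of ℚ i, hofK i⟩ : K))
  have hcomp : K.incl.comp g = LieHom.id := by
    apply FreeLieAlgebra.hom_ext
    intro x
    simp [g, FreeLieAlgebra.lift_of_apply, LieSubalgebra.coe_incl]
  have : ∀ F : FreeLieAlgebra ℚ (Fin n), F ∈ W := by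
    intro F
    have h1 : K.incl (g F) = F := by
      have := congrArg (fun φ : FreeLieAlgebra ℚ (Fin n) →ₗ⁅ℚ⁆ FreeLieAlgebra ℚ (Fin n) => φ F) hcomp
      simpa using this
    rw [← h1]
    exact (g F).2
  exact eq_top_iff.mpr fun F _ => this F

lemma eigen_proj {ι V : Type*} [AddCommGroup V] [Module ℚ V] (s : V →ₗ[ℚ] V)
    (v : ι → V) (μ : ι → ℚ) (lam : ℚ) :
    ∀ (N : ℕ) (T : Finset ι), ((T.image μ).filter (· ≠ lam)).card ≤ N →
    (∀ i ∈ T, s (v i) = μ i • v i) →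
    ∀ F ∈ Submodule.span ℚ (v '' ↑T), s F = lam • F →
      F ∈ Submodule.span ℚ (v '' ↑(T.filter (fun i => μ i = lam))) := by
  intro N
  induction N with
  | zero =>
    intro T hcard hT F hF hFe
    have hall : ∀ i ∈ T, μ i = lam := by
      intro i hi
      by_contra hne
      have : μ i ∈ (T.image μ).filter (· ≠ lam) :=
        Finset.mem_filter.mpr ⟨Finset.mem_image_of_mem μ hi, hne⟩
      have := Finset.card_pos.mpr ⟨_, this⟩
      omega
    rwa [Finset.filter_true_of_mem hall]
  | succ N ihN =>
    intro T hcard hT F hF hFe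
    by_cases hbad : ((T.image μ).filter (· ≠ lam)) = ∅
    · have hall : ∀ i ∈ T, μ i = lam := by
        intro i hi
        by_contra hne
        have : μ i ∈ (T.image μ).filter (· ≠ lam) :=
          Finset.mem_filter.mpr ⟨Finset.mem_image_of_mem μ hi, hne⟩
        rw [hbad] at this
        exact absurd this (Finset.notMem_empty _)
      rwa [Finset.filter_true_of_mem hall]
    · obtain ⟨k, hk⟩ := Finset.nonempty_iff_ne_empty.mpr hbad
      obtain ⟨hkim, hklam⟩ := Finset.mem_filter.mp hk
      set T' := T.filter (fun i => μ i ≠ k) with hT'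
      set f : V →ₗ[ℚ] V := s - k • (LinearMap.id : V →ₗ[ℚ] V) with hf
      have h1 : f F ∈ Submodule.span ℚ (v '' ↑T') := by
        clear hFe
        induction hF using Submodule.span_induction with
        | mem x hx =>
          obtain ⟨i, hi, rfl⟩ := hx
          have : f (v i) = (μ i - k) • v i := by
            simp only [hf, LinearMap.sub_apply, LinearMap.smul_apply, LinearMap.id_apply,
              hT i (Finset.mem_coe.mp hi), sub_smul]
          rw [this]
          by_cases hik : μ i = k
          · simp [hik]
          · exact Submodule.smul_mem _ _ (Submodule.subset_span
              ⟨i, Finset.mem_coe.mpr (Finset.mem_filter.mpr ⟨hi, hik⟩), rfl⟩)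
        | zero => simp
        | add x y _ _ hx hy => rw [map_add]; exact add_mem hx hy
        | smul r x _ hx => rw [map_smul]; exact Submodule.smul_mem _ _ hx
      have hlk : lam - k ≠ 0 := sub_ne_zero.mpr (Ne.symm hklam)
      have h2 : F = (lam - k)⁻¹ • (f F) := by
        have : f F = (lam - k) • F := by
          simp only [hf, LinearMap.sub_apply, LinearMap.smul_apply, LinearMap.id_apply,
            hFe, sub_smul]
        rw [this, smul_smul, inv_mul_cancel₀ hlk, one_smul]
      have hF' : F ∈ Submodule.span ℚ (v '' ↑T') := by
        rw [h2]; exact Submodule.smul_mem _ _ h1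
      have hcard' : ((T'.image μ).filter (· ≠ lam)).card ≤ N := by
        have hsub : (T'.image μ).filter (· ≠ lam) ⊆ ((T.image μ).filter (· ≠ lam)).erase k := by
          intro x hx
          obtain ⟨hxim, hxlam⟩ := Finset.mem_filter.mp hx
          obtain ⟨i, hi, rfl⟩ := Finset.mem_image.mp hxim
          obtain ⟨hiT, hik⟩ := Finset.mem_filter.mp hi
          exact Finset.mem_erase.mpr ⟨hik, Finset.mem_filter.mpr
            ⟨Finset.mem_image_of_mem μ hiT, hxlam⟩⟩
        have := Finset.card_le_card hsub
        have := Finset.card_erase_of_mem hk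
        omega
      have := ihN T' hcard' (fun i hi => hT i (Finset.mem_filter.mp hi).1) F hF' hFe
      refine Submodule.span_mono (Set.image_mono ?_) this
      intro i hi
      obtain ⟨hiT', hilam⟩ := Finset.mem_filter.mp (Finset.mem_coe.mp hi)
      exact Finset.mem_coe.mpr (Finset.mem_filter.mpr ⟨(Finset.mem_filter.mp hiT').1, hilam⟩)

lemma two_pow_inj : Function.Injective (fun m : ℕ => (2:ℚ) ^ m) := by
  intro a b hab
  have h2 : (2:ℚ) ^ a = (2:ℚ) ^ b := hab
  have : ((2^a : ℕ) : ℚ) = ((2^b : ℕ) : ℚ) := by push_cast; exact h2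
  exact Nat.pow_right_injective le_rfl (Nat.cast_inj.mp this)

lemma mem_span_count (c : Fin n → ℕ) (F : FreeLieAlgebra ℚ (Fin n))
    (hF : ∀ i : Fin n, scaleLie n i 2 F = ((2:ℚ) ^ (c i)) • F) :
    F ∈ Submodule.span ℚ (lnW n '' {l | ∀ i, l.count i = c i}) := by
  have hFtop : F ∈ Submodule.span ℚ (Set.range (lnW n)) := by
    rw [span_lnW_top]; trivial
  obtain ⟨co, hco⟩ := Finsupp.mem_span_range_iff_exists_finsupp.mp hFtop
  set T₀ := co.support with hT₀
  have hF0 : F ∈ Submodule.span ℚ (lnW n '' ↑T₀) := by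
    rw [← hco]
    refine Submodule.sum_mem _ ?_
    intro l hl
    exact Submodule.smul_mem _ _ (Submodule.subset_span ⟨l, Finset.mem_coe.mpr hl, rfl⟩)
  have key : ∀ s : Finset (Fin n),
      F ∈ Submodule.span ℚ (lnW n '' ↑(T₀.filter (fun l => ∀ i ∈ s, l.count i = c i))) := by
    intro s
    induction s using Finset.induction_on with
    | empty => simpa using hF0
    | @insert a s ha ih =>
      have step := eigen_proj (scaleLie n a 2).toLinearMap (lnW n)
        (fun l => (2:ℚ) ^ (l.count a)) ((2:ℚ) ^ (c a)) _ _ le_rfl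
        (fun l _ => scaleLie_lnW' a 2 l) F ih (hF a)
      refine Submodule.span_mono (Set.image_mono ?_) step
      intro l hl
      obtain ⟨hl1, hl2⟩ := Finset.mem_filter.mp (Finset.mem_coe.mp hl)
      obtain ⟨hl0, hls⟩ := Finset.mem_filter.mp hl1
      refine Finset.mem_coe.mpr (Finset.mem_filter.mpr ⟨hl0, ?_⟩)
      intro i hi
      rcases Finset.mem_insert.mp hi with rfl | his
      · exact two_pow_inj hl2
      · exact hls i his
  have := key Finset.univ
  refine Submodule.span_mono (Set.image_mono ?_) this
  intro l hl
  obtain ⟨_, hl2⟩ := Finset.mem_filter.mp (Finset.mem_coe.mp hl)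
  exact fun i => hl2 i (Finset.mem_univ i)

/-- The Lie algebra homomorphism into the monoid algebra of the free monoid. -/
noncomputable def psi (n : ℕ) :
    FreeLieAlgebra ℚ (Fin n) →ₗ⁅ℚ⁆ MonoidAlgebra ℚ (FreeMonoid (Fin n)) :=
  FreeLieAlgebra.lift ℚ (fun i => MonoidAlgebra.single (FreeMonoid.of i) 1)

lemma psi_coeff (a : Fin n) (l : List (Fin n)) (hal : a ∉ l) (u : List (Fin n)) :
    (psi n (lnW n (a :: l))).coeff (FreeMonoid.ofList (a :: u)) = if u = l then 1 else 0 := by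
  classical
  induction l using List.reverseRecOn generalizing u with
  | nil =>
    rw [lnW_single, psi, lift_of_apply]
    rw [show (MonoidAlgebra.single (FreeMonoid.of a) (1:ℚ)).coeff (FreeMonoid.ofList (a :: u))
      = if FreeMonoid.of a = FreeMonoid.ofList (a :: u) then 1 else 0 from by
        rw [MonoidAlgebra.coeff_single]; exact Finsupp.single_apply]
    by_cases hu : u = []
    · subst hu
      rw [if_pos rfl, if_pos]
      rfl
    · rw [if_neg hu, if_neg]
      intro h
      have h2 := congrArg FreeMonoid.toList h
      simp only [FreeMonoid.toList_of, FreeMonoid.toList_ofList] at h2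
      exact hu (by injection h2 with h1 h2; exact h2.symm)
  | append_singleton l' z ih =>
    have hal' : a ∉ l' := fun h => hal (List.mem_append_left _ h)
    have haz : a ≠ z := fun h => hal (by simp [h])
    rw [lnW_append, LieHom.map_lie, Ring.lie_def]
    rw [show psi n (of ℚ z) = MonoidAlgebra.single (FreeMonoid.of z) 1 from lift_of_apply _ _]
    set P := psi n (lnW n (a :: l')) with hP
    rw [MonoidAlgebra.coeff_sub, Finsupp.sub_apply]
    have hsnd : ((MonoidAlgebra.single (FreeMonoid.of z) 1 * P :
        MonoidAlgebra ℚ (FreeMonoid (Fin n)))).coeff (FreeMonoid.ofList (a :: u)) = 0 := by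
      apply MonoidAlgebra.coeff_single_mul_of_forall_mul_ne
      intro d hd'
      have hd := hd'.symm
      have h2 := congrArg FreeMonoid.toList hd
      simp only [FreeMonoid.toList_ofList, FreeMonoid.toList_mul, FreeMonoid.toList_of] at h2
      refine haz ?_
      have h3 := congrArg List.head? h2
      simpa using h3
    rw [hsnd, sub_zero]
    rcases List.eq_nil_or_concat u with hu | ⟨u', b, hu⟩
    · subst hu
      have h1 : ((P * MonoidAlgebra.single (FreeMonoid.of z) 1 :
          MonoidAlgebra ℚ (FreeMonoid (Fin n)))).coeff (FreeMonoid.ofList [a]) = 0 := by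
        apply MonoidAlgebra.coeff_mul_single_of_forall_mul_ne
        intro d hd'
        have hd := hd'.symm
        have h2 := congrArg FreeMonoid.toList hd
        simp only [FreeMonoid.toList_ofList, FreeMonoid.toList_mul, FreeMonoid.toList_of] at h2
        have hlen := congrArg List.length h2
        simp only [List.length_cons, List.length_nil, List.length_append] at hlen
        have hd0 : FreeMonoid.toList d = [] := List.length_eq_zero_iff.mp (by omega)
        rw [hd0] at h2
        refine haz ?_
        have h3 := congrArg List.head? h2
        simpa using h3
      rw [h1, if_neg (by simp)]
    · rw [List.concat_eq_append] at hu
      subst hu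
      by_cases hbz : b = z
      · subst hbz
        have key : ∀ d : FreeMonoid (Fin n), d * FreeMonoid.of b = FreeMonoid.ofList (a :: (u' ++ [b]))
            ↔ d = FreeMonoid.ofList (a :: u') := by
          intro d
          constructor
          · intro h
            have h2 := congrArg FreeMonoid.toList h
            simp only [FreeMonoid.toList_ofList, FreeMonoid.toList_mul, FreeMonoid.toList_of] at h2
            have h3 : FreeMonoid.toList d ++ [b] = (a :: u') ++ [b] := by
              rw [h2]; rfl
            have h4 := List.append_cancel_right h3
            apply FreeMonoid.toList.injective
            rw [h4]; rfl
          · rintro rfl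
            rfl
        rw [MonoidAlgebra.coeff_mul_single_eq_coeff_mul _ (fun d _ => key d), mul_one, ih hal' u']
        by_cases hu' : u' = l'
        · subst hu'; simp
        · rw [if_neg hu', if_neg]
          intro h
          exact hu' (List.append_cancel_right h)
      · have h1 : ((P * MonoidAlgebra.single (FreeMonoid.of z) 1 :
            MonoidAlgebra ℚ (FreeMonoid (Fin n)))).coeff
            (FreeMonoid.ofList (a :: (u' ++ [b]))) = 0 := by
          apply MonoidAlgebra.coeff_mul_single_of_forall_mul_ne
          intro d hd'
          have hd := hd'.symm
          have h2 := congrArg FreeMonoid.toList hd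
          simp only [FreeMonoid.toList_ofList, FreeMonoid.toList_mul, FreeMonoid.toList_of] at h2
          have h3 : ((a :: u') ++ [b]).getLast? = (FreeMonoid.toList d ++ [z]).getLast? := by
            rw [← h2]; rfl
          rw [List.getLast?_concat, List.getLast?_concat] at h3
          exact hbz (by injection h3)
        rw [h1, if_neg]
        intro h
        have h3 : ((a :: u') ++ [b]) = (a :: l') ++ [z] := by
          rw [show (a :: u') ++ [b] = a :: (u' ++ [b]) from rfl, h]; rfl
        have h4 := congrArg List.getLast? h3
        rw [List.getLast?_concat, List.getLast?_concat] at h4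
        exact hbz (by injection h4)


lemma lnW_family_indep {k : ℕ} (b : Fin n) (R : Finset (Fin n)) (hbR : b ∉ R) :
    LinearIndependent ℚ (fun (e : Fin k ≃ {x : Fin n // x ∈ R}) =>
      lnW n (b :: List.ofFn (fun i => ((e i : Fin n))))) := by
  classical
  rw [Fintype.linearIndependent_iff]
  intro g hg e₀
  set w := FreeMonoid.ofList (b :: List.ofFn (fun i => ((e₀ i : Fin n)))) with hw
  set φ : FreeLieAlgebra ℚ (Fin n) →ₗ[ℚ] ℚ :=
    (Finsupp.lapply w).comp ((MonoidAlgebra.coeffLinearEquiv ℚ).toLinearMap.comp (psi n).toLinearMap) with hφ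
  have hterm : ∀ e : Fin k ≃ {x : Fin n // x ∈ R},
      φ (lnW n (b :: List.ofFn (fun i => ((e i : Fin n))))) = if e = e₀ then 1 else 0 := by
    intro e
    have hb : b ∉ List.ofFn (fun i => ((e i : Fin n))) := by
      intro hmem
      obtain ⟨i, hi⟩ := List.mem_ofFn.mp hmem
      exact hbR (hi ▸ (e i).2)
    have hco := psi_coeff b (List.ofFn (fun i => ((e i : Fin n)))) hb
      (List.ofFn (fun i => ((e₀ i : Fin n))))
    have hre : φ (lnW n (b :: List.ofFn (fun i => ((e i : Fin n)))))
        = ((psi n) (lnW n (b :: List.ofFn (fun i => ((e i : Fin n)))))).coeff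
          (FreeMonoid.ofList (b :: List.ofFn (fun i => ((e₀ i : Fin n))))) := rfl
    rw [hre, hco]
    congr 1
    simp only [eq_iff_iff]
    constructor
    · intro h
      have h2 := List.ofFn_inj.mp h
      ext i : 1
      have := congrFun h2 i
      exact Subtype.ext this.symm
    · rintro rfl; rfl
  have happ := congrArg φ hg
  rw [map_sum, map_zero] at happ
  simp only [map_smul] at happ
  rw [Finset.sum_congr rfl (fun e _ => by rw [hterm e])] at happ
  rw [Finset.sum_eq_single e₀ (fun e _ hne => by rw [if_neg hne, smul_zero])
    (fun h => absurd (Finset.mem_univ e₀) h)] at happ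
  rw [if_pos rfl, smul_eq_mul, mul_one] at happ
  exact happ


lemma list_to_equiv {k : ℕ} (R : Finset (Fin n)) (hk : R.card = k) (σ : List (Fin n))
    (hσ : (σ : Multiset (Fin n)) = R.val) :
    ∃ e : Fin k ≃ {x : Fin n // x ∈ R}, σ = List.ofFn (fun i => ((e i : Fin n))) := by
  classical
  have hnd : σ.Nodup := by
    have := R.nodup
    rwa [← hσ, Multiset.coe_nodup] at this
  have hlen : σ.length = k := by
    have := congrArg Multiset.card hσ
    simpa [hk] using this
  have hmem : ∀ x ∈ σ, x ∈ R := by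
    intro x hx
    have : x ∈ (σ : Multiset (Fin n)) := by exact_mod_cast hx
    rw [hσ] at this
    exact this
  set f : Fin k → {x : Fin n // x ∈ R} :=
    fun i => ⟨σ.get (Fin.cast hlen.symm i), hmem _ (σ.get_mem _)⟩ with hf
  have hinj : Function.Injective f := by
    intro i j hij
    have h2 : σ.get (Fin.cast hlen.symm i) = σ.get (Fin.cast hlen.symm j) :=
      congrArg Subtype.val hij
    have h3 := (List.nodup_iff_injective_get.mp hnd) h2
    have h4 := congrArg Fin.val h3
    exact Fin.ext h4
  have hbij : Function.Bijective f := by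
    rw [Fintype.bijective_iff_injective_and_card]
    refine ⟨hinj, ?_⟩
    rw [Fintype.card_fin, Fintype.card_coe, hk]
  refine ⟨Equiv.ofBijective f hbij, ?_⟩
  apply List.ext_get (by simp [hlen])
  intro i h1 h2
  rw [List.get_ofFn]
  simp only [Equiv.ofBijective_apply, hf]
  congr 1

lemma lnW_mem_avoiding (j : Fin n) (l : List (Fin n)) (h0 : l.count j = 0)
    (h1 : ∀ i : Fin n, i ≠ j → l.count i = 1) :
    lnW n l ∈ lieMultilinearAvoiding n j := by
  refine ⟨fun t => ?_, fun i hij t => ?_⟩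
  · rw [scaleLie_lnW', h0, pow_zero, one_smul]
  · rw [scaleLie_lnW', h1 i hij, pow_one]

variable (n) in
noncomputable def bj (j : Fin n) (hn : 2 ≤ n) : Fin n :=
  (Finset.univ.erase j).min' (by
    apply Finset.card_pos.mp
    rw [Finset.card_erase_of_mem (Finset.mem_univ j), Finset.card_univ, Fintype.card_fin]
    omega)

lemma bj_mem (j : Fin n) (hn : 2 ≤ n) : bj n j hn ∈ Finset.univ.erase j :=
  Finset.min'_mem _ _

lemma bj_ne (j : Fin n) (hn : 2 ≤ n) : bj n j hn ≠ j :=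
  (Finset.mem_erase.mp (bj_mem j hn)).1

variable (n) in
noncomputable def Rj (j : Fin n) (hn : 2 ≤ n) : Finset (Fin n) :=
  (Finset.univ.erase j).erase (bj n j hn)

lemma Rj_card (j : Fin n) (hn : 2 ≤ n) : (Rj n j hn).card = n - 2 := by
  rw [Rj, Finset.card_erase_of_mem (bj_mem j hn),
    Finset.card_erase_of_mem (Finset.mem_univ j), Finset.card_univ, Fintype.card_fin]
  omega

lemma bj_not_mem_Rj (j : Fin n) (hn : 2 ≤ n) : bj n j hn ∉ Rj n j hn :=
  Finset.notMem_erase _ _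

variable (n) in
/-- The basis family of `L_j`. -/
noncomputable def famJ (j : Fin n) (hn : 2 ≤ n) :
    (Fin (n - 2) ≃ {x : Fin n // x ∈ Rj n j hn}) → FreeLieAlgebra ℚ (Fin n) :=
  fun e => lnW n (bj n j hn :: List.ofFn (fun i => ((e i : Fin n))))

lemma famJ_list_mem (j : Fin n) (hn : 2 ≤ n) (e : Fin (n - 2) ≃ {x : Fin n // x ∈ Rj n j hn})
    (x : Fin n) : x ∈ (bj n j hn :: List.ofFn (fun i => ((e i : Fin n)))) ↔ x ≠ j := by
  simp only [List.mem_cons, List.mem_ofFn]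
  constructor
  · rintro (rfl | ⟨i, rfl⟩)
    · exact bj_ne j hn
    · exact (Finset.mem_erase.mp (Finset.mem_erase.mp (e i).2).2).1
  · intro hx
    by_cases hxb : x = bj n j hn
    · exact Or.inl hxb
    · refine Or.inr ?_
      have hxR : x ∈ Rj n j hn :=
        Finset.mem_erase.mpr ⟨hxb, Finset.mem_erase.mpr ⟨hx, Finset.mem_univ x⟩⟩
      obtain ⟨i, hi⟩ := e.surjective ⟨x, hxR⟩
      exact ⟨i, by simp only [hi]⟩

lemma famJ_list_nodup (j : Fin n) (hn : 2 ≤ n)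
    (e : Fin (n - 2) ≃ {x : Fin n // x ∈ Rj n j hn}) :
    (bj n j hn :: List.ofFn (fun i => ((e i : Fin n)))).Nodup := by
  refine List.nodup_cons.mpr ⟨?_, ?_⟩
  · intro hmem
    obtain ⟨i, hi⟩ := List.mem_ofFn.mp hmem
    exact bj_not_mem_Rj j hn (hi ▸ (e i).2)
  · rw [List.nodup_ofFn]
    intro i i' hii
    exact e.injective (Subtype.ext hii)

lemma famJ_mem (j : Fin n) (hn : 2 ≤ n) (e : Fin (n - 2) ≃ {x : Fin n // x ∈ Rj n j hn}) :
    famJ n j hn e ∈ lieMultilinearAvoiding n j := by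
  apply lnW_mem_avoiding
  · exact List.count_eq_zero.mpr (fun h => ((famJ_list_mem j hn e j).mp h) rfl)
  · intro i hij
    exact List.count_eq_one_of_mem (famJ_list_nodup j hn e) ((famJ_list_mem j hn e i).mpr hij)

lemma famJ_indep (j : Fin n) (hn : 2 ≤ n) : LinearIndependent ℚ (famJ n j hn) :=
  lnW_family_indep (bj n j hn) (Rj n j hn) (bj_not_mem_Rj j hn)

lemma avoiding_le_span (j : Fin n) (hn : 2 ≤ n) :
    lieMultilinearAvoiding n j ≤ Submodule.span ℚ (Set.range (famJ n j hn)) := by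
  classical
  intro F hF
  obtain ⟨hF1, hF2⟩ := hF
  set c : Fin n → ℕ := fun i => if i = j then 0 else 1 with hc
  have hcF : ∀ i : Fin n, scaleLie n i 2 F = ((2:ℚ) ^ (c i)) • F := by
    intro i
    by_cases hij : i = j
    · subst hij; rw [hF1 2]; simp [hc]
    · rw [hF2 i hij 2]; simp [hc, hij]
  have hsp := mem_span_count c F hcF
  refine Submodule.span_le.mpr ?_ hsp
  rintro _ ⟨l, hl, rfl⟩
  -- l has count 0 at j and 1 elsewhere
  have hjl : j ∉ l := List.count_eq_zero.mp (by simpa [hc] using hl j)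
  have hmem1 : ∀ i : Fin n, i ≠ j → i ∈ l := by
    intro i hij
    have := hl i
    rw [hc] at this
    simp only [if_neg hij] at this
    exact List.count_pos_iff.mp (by omega)
  have hnd : l.Nodup := by
    rw [List.nodup_iff_count_le_one]
    intro x
    by_cases hxj : x = j
    · subst hxj; rw [List.count_eq_zero.mpr hjl]; omega
    · have := hl x; rw [hc] at this; simp only [if_neg hxj] at this; omega
  have hmeml : ∀ x : Fin n, x ∈ l ↔ x ≠ j := by
    intro x
    constructor
    · intro hx hxj; subst hxj; exact hjl hx
    · exact hmem1 x
  have hbjl : bj n j hn ∈ l := hmem1 _ (bj_ne j hn)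
  cases l with
  | nil => exact absurd hbjl List.not_mem_nil
  | cons a l₀ =>
    have h3 := lnW_mem_spanB_of_mem (bj n j hn) l₀ a hbjl
    -- now show spanB ≤ span (range famJ)
    have hms : (((a :: l₀ : List (Fin n)) : Multiset (Fin n))).erase (bj n j hn)
        = (Rj n j hn).val := by
      have h4 : ((a :: l₀ : List (Fin n)) : Multiset (Fin n)) = (Finset.univ.erase j).val := by
        rw [Multiset.Nodup.ext (by exact_mod_cast hnd) (Finset.univ.erase j).nodup]
        intro x
        rw [Multiset.mem_coe, ← Finset.mem_def, Finset.mem_erase]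
        simp [hmeml x]
      rw [h4, ← Finset.erase_val]
      rfl
    rw [hms] at h3
    refine Submodule.span_le.mpr ?_ h3
    rintro _ ⟨σ, hσ, rfl⟩
    obtain ⟨e, rfl⟩ := list_to_equiv (Rj n j hn) (Rj_card j hn) σ hσ
    exact Submodule.subset_span ⟨e, rfl⟩

lemma avoiding_eq_span (j : Fin n) (hn : 2 ≤ n) :
    lieMultilinearAvoiding n j = Submodule.span ℚ (Set.range (famJ n j hn)) := by
  refine le_antisymm (avoiding_le_span j hn) ?_
  rw [Submodule.span_le]
  rintro _ ⟨e, rfl⟩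
  exact famJ_mem j hn e

lemma card_famJ_index (j : Fin n) (hn : 2 ≤ n) :
    Fintype.card (Fin (n - 2) ≃ {x : Fin n // x ∈ Rj n j hn}) = Nat.factorial (n - 2) := by
  classical
  have hcard : Fintype.card {x : Fin n // x ∈ Rj n j hn} = n - 2 := by
    rw [Fintype.card_coe, Rj_card j hn]
  have e : Fin (n - 2) ≃ {x : Fin n // x ∈ Rj n j hn} :=
    (Fintype.equivFinOfCardEq hcard).symm
  rw [Fintype.card_equiv e, Fintype.card_fin]

lemma finrank_avoiding (j : Fin n) (hn : 2 ≤ n) :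
    Module.finrank ℚ (lieMultilinearAvoiding n j) = Nat.factorial (n - 2) := by
  rw [avoiding_eq_span j hn, finrank_span_eq_card (famJ_indep j hn), card_famJ_index j hn]

theorem fd_avoiding (j : Fin n) (hn : 2 ≤ n) :
    FiniteDimensional ℚ (lieMultilinearAvoiding n j) := by
  rw [avoiding_eq_span j hn]
  exact FiniteDimensional.span_of_finite ℚ (Set.finite_range _)

variable (n) in
noncomputable def b0 (hn : 2 ≤ n) : Fin n :=
  (Finset.univ : Finset (Fin n)).min' (by
    apply Finset.card_pos.mp
    rw [Finset.card_univ, Fintype.card_fin]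
    omega)

variable (n) in
noncomputable def R0 (hn : 2 ≤ n) : Finset (Fin n) :=
  Finset.univ.erase (b0 n hn)

lemma R0_card (hn : 2 ≤ n) : (R0 n hn).card = n - 1 := by
  rw [R0, Finset.card_erase_of_mem (Finset.mem_univ _), Finset.card_univ, Fintype.card_fin]

lemma b0_not_mem_R0 (hn : 2 ≤ n) : b0 n hn ∉ R0 n hn := Finset.notMem_erase _ _

variable (n) in
/-- The basis family of the multilinear part. -/
noncomputable def famM (hn : 2 ≤ n) :
    (Fin (n - 1) ≃ {x : Fin n // x ∈ R0 n hn}) → FreeLieAlgebra ℚ (Fin n) :=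
  fun e => lnW n (b0 n hn :: List.ofFn (fun i => ((e i : Fin n))))

lemma famM_indep (hn : 2 ≤ n) : LinearIndependent ℚ (famM n hn) :=
  lnW_family_indep (b0 n hn) (R0 n hn) (b0_not_mem_R0 hn)

lemma card_famM_index (hn : 2 ≤ n) :
    Fintype.card (Fin (n - 1) ≃ {x : Fin n // x ∈ R0 n hn}) = Nat.factorial (n - 1) := by
  classical
  have hcard : Fintype.card {x : Fin n // x ∈ R0 n hn} = n - 1 := by
    rw [Fintype.card_coe, R0_card hn]
  have e : Fin (n - 1) ≃ {x : Fin n // x ∈ R0 n hn} :=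
    (Fintype.equivFinOfCardEq hcard).symm
  rw [Fintype.card_equiv e, Fintype.card_fin]

/-- Any multilinear left-normed word on all the letters lies in the span of `famM`. -/
lemma lnW_full_mem_span_famM (hn : 2 ≤ n) (a : Fin n) (l : List (Fin n))
    (hnd : (a :: l).Nodup) (hfull : ∀ x : Fin n, x ∈ a :: l) :
    lnW n (a :: l) ∈ Submodule.span ℚ (Set.range (famM n hn)) := by
  classical
  have h3 := lnW_mem_spanB_of_mem (b0 n hn) l a (hfull _)
  have hms : (((a :: l : List (Fin n)) : Multiset (Fin n))).erase (b0 n hn)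
      = (R0 n hn).val := by
    have h4 : ((a :: l : List (Fin n)) : Multiset (Fin n)) = (Finset.univ : Finset (Fin n)).val := by
      rw [Multiset.Nodup.ext (by exact_mod_cast hnd) Finset.univ.nodup]
      intro x
      rw [Multiset.mem_coe, ← Finset.mem_def]
      simp [hfull x]
    rw [h4, R0, Finset.erase_val]
  rw [hms] at h3
  refine Submodule.span_le.mpr ?_ h3
  rintro _ ⟨σ, hσ, rfl⟩
  obtain ⟨e, rfl⟩ := list_to_equiv (R0 n hn) (R0_card hn) σ hσ
  exact Submodule.subset_span ⟨e, rfl⟩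

lemma bracket_mem_span_famM (hn : 2 ≤ n) (j : Fin n) (u : FreeLieAlgebra ℚ (Fin n))
    (hu : u ∈ lieMultilinearAvoiding n j) :
    ⁅u, of ℚ j⁆ ∈ Submodule.span ℚ (Set.range (famM n hn)) := by
  classical
  rw [avoiding_eq_span j hn] at hu
  induction hu using Submodule.span_induction with
  | mem x hx =>
    obtain ⟨e, rfl⟩ := hx
    rw [famJ, ← lnW_append]
    refine lnW_full_mem_span_famM hn _ _ ?_ ?_
    · rw [show bj n j hn :: (List.ofFn (fun i => ((e i : Fin n))) ++ [j])
        = (bj n j hn :: List.ofFn (fun i => ((e i : Fin n)))) ++ [j] from rfl]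
      rw [List.nodup_append]
      refine ⟨famJ_list_nodup j hn e, List.nodup_singleton j, ?_⟩
      intro x hx y hy hxy
      exact ((famJ_list_mem j hn e x).mp hx) (hxy.trans (List.mem_singleton.mp hy))
    · intro x
      by_cases hxj : x = j
      · subst hxj; simp
      · have := (famJ_list_mem j hn e x).mpr hxj
        rcases List.mem_cons.mp this with h | h
        · exact List.mem_cons.mpr (Or.inl h)
        · exact List.mem_cons.mpr (Or.inr (List.mem_append_left _ h))
  | zero => rw [zero_lie]; exact Submodule.zero_mem _
  | add x y _ _ hx hy => rw [add_lie]; exact Submodule.add_mem _ hx hy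
  | smul r x _ hx => rw [smul_lie]; exact Submodule.smul_mem _ _ hx

lemma range_delta_eq (hn : 2 ≤ n) :
    LinearMap.range (lieDelta n) = Submodule.span ℚ (Set.range (famM n hn)) := by
  classical
  apply le_antisymm
  · rintro _ ⟨F, rfl⟩
    rw [show lieDelta n F
      = ∑ j : Fin n, ⁅((F j : FreeLieAlgebra ℚ (Fin n))), of ℚ j⁆ from rfl]
    refine Submodule.sum_mem _ ?_
    intro j _
    exact bracket_mem_span_famM hn j _ (F j).2
  · rw [Submodule.span_le]
    rintro _ ⟨e, rfl⟩
    -- split the word as (b0 :: σ') ++ [z]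
    rcases List.eq_nil_or_concat (List.ofFn (fun i => ((e i : Fin n)))) with hnil | ⟨σ', z, hsp⟩
    · exfalso
      have := congrArg List.length hnil
      simp only [List.length_ofFn, List.length_nil] at this
      omega
    · rw [List.concat_eq_append] at hsp
      have hz_mem : z ∈ List.ofFn (fun i => ((e i : Fin n))) := by
        rw [hsp]; exact List.mem_append_right _ (List.mem_singleton_self z)
      obtain ⟨i, hi⟩ := List.mem_ofFn.mp hz_mem
      have hzR : z ∈ R0 n hn := hi ▸ (e i).2
      -- nodup facts
      have hnodup : (b0 n hn :: List.ofFn (fun i => ((e i : Fin n)))).Nodup := by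
        refine List.nodup_cons.mpr ⟨?_, ?_⟩
        · intro hmem
          obtain ⟨i', hi'⟩ := List.mem_ofFn.mp hmem
          exact b0_not_mem_R0 hn (hi' ▸ (e i').2)
        · rw [List.nodup_ofFn]
          intro i1 i2 h12
          exact e.injective (Subtype.ext h12)
      have hfull : ∀ x : Fin n, x ∈ b0 n hn :: List.ofFn (fun i => ((e i : Fin n))) := by
        intro x
        by_cases hxb : x = b0 n hn
        · exact List.mem_cons.mpr (Or.inl hxb)
        · have hxR : x ∈ R0 n hn := Finset.mem_erase.mpr ⟨hxb, Finset.mem_univ x⟩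
          obtain ⟨i', hi'⟩ := e.surjective ⟨x, hxR⟩
          refine List.mem_cons.mpr (Or.inr (List.mem_ofFn.mpr ?_))
          exact ⟨i', by simp only [hi']⟩
      -- the truncated word lies in L_z
      have hmem_avoid : lnW n (b0 n hn :: σ') ∈ lieMultilinearAvoiding n z := by
        have hnd' : (b0 n hn :: σ').Nodup := by
          have : (b0 n hn :: σ' : List (Fin n)).Sublist (b0 n hn :: List.ofFn (fun i => ((e i : Fin n)))) := by
            rw [hsp, show b0 n hn :: (σ' ++ [z]) = (b0 n hn :: σ') ++ [z] from rfl]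
            exact List.sublist_append_left _ _
          exact this.nodup hnodup
        have h5 : ((b0 n hn :: σ') ++ [z]).Nodup := by
          rw [show (b0 n hn :: σ') ++ [z] = b0 n hn :: (σ' ++ [z]) from rfl, ← hsp]
          exact hnodup
        have hz_not : z ∉ b0 n hn :: σ' := fun hzin =>
          (List.nodup_append.mp h5).2.2 _ hzin z (List.mem_singleton_self z) rfl
        apply lnW_mem_avoiding
        · exact List.count_eq_zero.mpr hz_not
        · intro x hxz
          apply List.count_eq_one_of_mem hnd'
          have hxfull := hfull x
          rw [hsp, show b0 n hn :: (σ' ++ [z]) = (b0 n hn :: σ') ++ [z] from rfl] at hxfull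
          rcases List.mem_append.mp hxfull with h | h
          · exact h
          · exact absurd (List.mem_singleton.mp h) hxz
      refine ⟨Pi.single z ⟨lnW n (b0 n hn :: σ'), hmem_avoid⟩, ?_⟩
      rw [show lieDelta n (Pi.single z ⟨lnW n (b0 n hn :: σ'), hmem_avoid⟩)
        = ∑ j : Fin n, ⁅(((Pi.single z ⟨lnW n (b0 n hn :: σ'), hmem_avoid⟩ : (j : Fin n) → lieMultilinearAvoiding n j) j : FreeLieAlgebra ℚ (Fin n))), of ℚ j⁆ from rfl]
      rw [Finset.sum_eq_single z]
      · rw [Pi.single_eq_same, famM, hsp, ← lnW_append]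
      · intro i' _ hiz
        rw [Pi.single_eq_of_ne hiz]
        simp
      · intro h
        exact absurd (Finset.mem_univ z) h

end LieDeltaProof

/-- For `n ≥ 2`, the kernel of the linear map
`δ : ⊕_{j ∈ Fin n} L_j → L`, `δ(F_0, …, F_{n−1}) = Σ_j ⁅F_j, x_j⁆`, is a
finite-dimensional `ℚ`-vector space of dimension `(n − 2)!`. -/
theorem lieDelta_ker_finrank (n : ℕ) (hn : 2 ≤ n) :
    FiniteDimensional ℚ (LinearMap.ker (lieDelta n)) ∧
    Module.finrank ℚ (LinearMap.ker (lieDelta n)) = Nat.factorial (n - 2) := by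
  classical
  haveI hfd : ∀ j : Fin n, FiniteDimensional ℚ (lieMultilinearAvoiding n j) :=
    fun j => LieDeltaProof.fd_avoiding j hn
  constructor
  · infer_instance
  · have hrn := LinearMap.finrank_range_add_finrank_ker (lieDelta n)
    have hdom : Module.finrank ℚ ((j : Fin n) → lieMultilinearAvoiding n j)
        = n * Nat.factorial (n - 2) := by
      rw [Module.finrank_pi_fintype ℚ]
      rw [Finset.sum_congr rfl (fun j _ => LieDeltaProof.finrank_avoiding j hn)]
      rw [Finset.sum_const, Finset.card_univ, Fintype.card_fin, smul_eq_mul]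
    have hrange : Module.finrank ℚ (LinearMap.range (lieDelta n)) = Nat.factorial (n - 1) := by
      rw [LieDeltaProof.range_delta_eq hn,
        finrank_span_eq_card (LieDeltaProof.famM_indep hn),
        LieDeltaProof.card_famM_index hn]
    rw [hdom, hrange] at hrn
    have hfac : Nat.factorial (n - 1) = (n - 1) * Nat.factorial (n - 2) := by
      have h2 : n - 1 = (n - 2) + 1 := by omega
      rw [h2, Nat.factorial_succ]
    have hmul : n * Nat.factorial (n - 2)
        = (n - 1) * Nat.factorial (n - 2) + Nat.factorial (n - 2) := by
      have h2 : n = (n - 1) + 1 := by omega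
      calc n * Nat.factorial (n - 2) = ((n - 1) + 1) * Nat.factorial (n - 2) := by rw [← h2]
        _ = (n - 1) * Nat.factorial (n - 2) + Nat.factorial (n - 2) := by ring
    rw [hfac, hmul] at hrn
    exact Nat.add_left_cancel hrn
end

section
/- The family of vectors r_{ij} := (e_i + e_j, −h_{ij}) in (Fin n → ℚ) × (Finset (Fin n) → ℚ), indexed by the n(n−1)/2 unordered pairs {i, j} of distinct elements of Fin n, is linearly independent over ℚ. -/
/-- The indicator function `h_{ij} : Finset (Fin n) → ℚ` of the collection of subsets
`A ⊆ Fin n` with `2 ≤ |A| ≤ n − 2` that separate `i` and `j` (contain exactly one of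
`i` and `j`). -/
def sepIndicator (n : ℕ) (i j : Fin n) : Finset (Fin n) → ℚ := fun A =>
  if 2 ≤ A.card ∧ A.card ≤ n - 2 ∧ ((i ∈ A ∧ j ∉ A) ∨ (j ∈ A ∧ i ∉ A)) then 1 else 0

/-- The vector `r_{ij} := (e_i + e_j, −h_{ij})` in `(Fin n → ℚ) × (Finset (Fin n) → ℚ)`,
where `e_i` is the `i`-th standard basis vector; note `r_{ij} = r_{ji}`. -/
def rVec (n : ℕ) (i j : Fin n) : (Fin n → ℚ) × (Finset (Fin n) → ℚ) :=
  (Pi.single i 1 + Pi.single j 1, -sepIndicator n i j)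

/-- A family whose image under a linear map is the standard basis is independent. -/
lemma indep_of_dual {ι M : Type*} [Fintype ι] [DecidableEq ι] [AddCommGroup M]
    [Module ℚ M] (f : ι → M) (L : M →ₗ[ℚ] (ι → ℚ))
    (h : ∀ q, L (f q) = Pi.single q 1) : LinearIndependent ℚ f := by
  have h2 : LinearIndependent ℚ (L ∘ f) := by
    have : L ∘ f = (Pi.basisFun ℚ ι : ι → ι → ℚ) := by
      funext q; simp [h q]
    rw [this]; exact (Pi.basisFun ℚ ι).linearIndependent
  exact LinearIndependent.of_comp L h2

/-- Dual functionals for `n ≥ 4`: `(v,w) ↦ (v i + v j + w {i,j})/2`. -/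
def L4 (n : ℕ) : ((Fin n → ℚ) × (Finset (Fin n) → ℚ)) →ₗ[ℚ]
    ({p : Fin n × Fin n // p.1 < p.2} → ℚ) where
  toFun x := fun p => (x.1 p.1.1 + x.1 p.1.2 + x.2 {p.1.1, p.1.2}) / 2
  map_add' x y := by funext p; simp; ring
  map_smul' c x := by
    funext p
    simp only [Prod.smul_fst, Prod.smul_snd, Pi.smul_apply, smul_eq_mul, RingHom.id_apply]
    ring

/-- Dual functionals for `n = 3`: `(v,w) ↦ v i + v j - (∑ k, v k)/2`. -/
def L3 (n : ℕ) : ((Fin n → ℚ) × (Finset (Fin n) → ℚ)) →ₗ[ℚ]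
    ({p : Fin n × Fin n // p.1 < p.2} → ℚ) where
  toFun x := fun p => x.1 p.1.1 + x.1 p.1.2 - (∑ k, x.1 k) / 2
  map_add' x y := by funext p; simp [Finset.sum_add_distrib]; ring
  map_smul' c x := by
    funext p
    simp only [Prod.smul_fst, Pi.smul_apply, smul_eq_mul, RingHom.id_apply]
    rw [show (∑ k, c * x.1 k) = c * ∑ k, x.1 k from (Finset.mul_sum _ _ _).symm]
    ring

lemma L4_spec (n : ℕ) (hn : 4 ≤ n) (q : {p : Fin n × Fin n // p.1 < p.2}) :
    L4 n (rVec n q.1.1 q.1.2) = Pi.single q 1 := by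
  funext p
  obtain ⟨⟨i, j⟩, hij⟩ := p
  obtain ⟨⟨k, l⟩, hkl⟩ := q
  have hijne : i ≠ j := ne_of_lt hij
  have hcard : ({i, j} : Finset (Fin n)).card = 2 := by
    rw [Finset.card_insert_of_notMem (by simpa using hijne), Finset.card_singleton]
  simp only [rVec, L4, sepIndicator, LinearMap.coe_mk, AddHom.coe_mk, Pi.add_apply,
    Pi.single_apply, Pi.neg_apply, hcard, Finset.mem_insert, Finset.mem_singleton]
  have h2 : 2 ≤ n - 2 := by omega
  simp only [le_refl, h2, true_and, Subtype.mk.injEq, Prod.mk.injEq]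
  simp only [Fin.lt_def] at hij hkl
  split_ifs <;>
    first
      | (exfalso; simp only [Fin.ext_iff, not_or, not_and] at *; omega)
      | norm_num

lemma L3_spec (q : {p : Fin 3 × Fin 3 // p.1 < p.2}) :
    L3 3 (rVec 3 q.1.1 q.1.2) = Pi.single q 1 := by
  funext p
  obtain ⟨⟨i, j⟩, hij⟩ := p
  obtain ⟨⟨k, l⟩, hkl⟩ := q
  have hsum : (∑ m : Fin 3, ((Pi.single k 1 + Pi.single l 1 : Fin 3 → ℚ)) m) = 2 := by
    simp only [Pi.add_apply, Finset.sum_add_distrib, Fintype.sum_pi_single']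
    norm_num
  simp only [rVec, L3, LinearMap.coe_mk, AddHom.coe_mk]
  rw [hsum]
  simp only [Pi.add_apply, Pi.single_apply, Subtype.mk.injEq, Prod.mk.injEq]
  have hj := j.isLt
  have hl := l.isLt
  simp only [Fin.lt_def] at hij hkl
  split_ifs <;>
    first
      | (exfalso; simp only [Fin.ext_iff, not_or, not_and] at *; omega)
      | norm_num

/-- For `n ≥ 3`, the family of vectors `r_{ij}`, indexed by the
`n(n−1)/2` unordered pairs `{i, j}` of distinct elements of `Fin n` (here represented
by ordered pairs with `i < j`), is linearly independent over `ℚ`. -/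
theorem rVec_linearIndependent (n : ℕ) (hn : 3 ≤ n) :
    LinearIndependent ℚ
      (fun p : {p : Fin n × Fin n // p.1 < p.2} => rVec n p.1.1 p.1.2) := by
  by_cases h4 : 4 ≤ n
  · exact indep_of_dual _ (L4 n) (fun q => L4_spec n h4 q)
  · have h3 : n = 3 := by omega
    subst h3
    exact indep_of_dual _ (L3 3) L3_spec
end

section
/- Let W ⊆ (Fin n → ℚ) × (Finset (Fin n) → ℚ) be the subspace of pairs (ψ, f) such that f(A) = 0 whenever |A| < 2 or |A| > n−2, and f(A) = f(Aᶜ) for all A. Then every r_{ij} lies in W, the dimension of W is 2^{n−1} − 1, and the quotient of W by the span of the vectors r_{ij} has dimension 2^{n−1} − n(n−1)/2 − 1 (which equals the dimension of H²(M̄_{0,n})). -/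
open Finset

/-- The subspace `W ⊆ (Fin n → ℚ) × (Finset (Fin n) → ℚ)` of pairs `(ψ, f)` such that
`f(A) = 0` whenever `|A| < 2` or `|A| > n − 2`, and `f(A) = f(Aᶜ)` for all `A`. -/
def Wsub (n : ℕ) : Submodule ℚ ((Fin n → ℚ) × (Finset (Fin n) → ℚ)) where
  carrier := {p | (∀ A : Finset (Fin n), (A.card < 2 ∨ n - 2 < A.card) → p.2 A = 0) ∧
    ∀ A : Finset (Fin n), p.2 A = p.2 Aᶜ}
  add_mem' := by
    rintro a b ⟨ha1, ha2⟩ ⟨hb1, hb2⟩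
    refine ⟨fun A hA => ?_, fun A => ?_⟩
    · show a.2 A + b.2 A = 0
      rw [ha1 A hA, hb1 A hA, add_zero]
    · show a.2 A + b.2 A = a.2 Aᶜ + b.2 Aᶜ
      rw [ha2 A, hb2 A]
  zero_mem' := ⟨fun A _ => rfl, fun A => rfl⟩
  smul_mem' := by
    rintro c a ⟨ha1, ha2⟩
    refine ⟨fun A hA => ?_, fun A => ?_⟩
    · show c * a.2 A = 0
      rw [ha1 A hA, mul_zero]
    · show c * a.2 A = c * a.2 Aᶜ
      rw [ha2 A]


open Finset

lemma card_le_n {n : ℕ} (A : Finset (Fin n)) : A.card ≤ n := by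
  simpa using Finset.card_le_univ A

lemma compl_card {n : ℕ} (A : Finset (Fin n)) : Aᶜ.card = n - A.card := by
  rw [Finset.card_compl, Fintype.card_fin]

lemma rVec_mem_aux (n : ℕ) (i j : Fin n) :
    (∀ A : Finset (Fin n), (A.card < 2 ∨ n - 2 < A.card) → (rVec n i j).2 A = 0) ∧
    ∀ A : Finset (Fin n), (rVec n i j).2 A = (rVec n i j).2 Aᶜ := by
  constructor
  · intro A hA
    show -sepIndicator n i j A = 0
    rw [sepIndicator, if_neg, neg_zero]
    rintro ⟨h1, h2, -⟩; omega
  · intro A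
    show -sepIndicator n i j A = -sepIndicator n i j Aᶜ
    rw [sepIndicator, neg_inj]
    have hc := compl_card A
    have hA := card_le_n A
    have hi : i ∈ Aᶜ ↔ i ∉ A := Finset.mem_compl
    have hj : j ∈ Aᶜ ↔ j ∉ A := Finset.mem_compl
    have : (2 ≤ A.card ∧ A.card ≤ n - 2 ∧ ((i ∈ A ∧ j ∉ A) ∨ (j ∈ A ∧ i ∉ A))) ↔
        (2 ≤ Aᶜ.card ∧ Aᶜ.card ≤ n - 2 ∧ ((i ∈ Aᶜ ∧ j ∉ Aᶜ) ∨ (j ∈ Aᶜ ∧ i ∉ Aᶜ))) := by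
      rw [hi, hj]
      constructor
      · rintro ⟨h1, h2, h3⟩; exact ⟨by omega, by omega, by tauto⟩
      · rintro ⟨h1, h2, h3⟩; exact ⟨by omega, by omega, by tauto⟩
    rw [if_congr this rfl rfl]; rfl
def rSet (n : ℕ) (s : Finset (Fin n)) : (Fin n → ℚ) × (Finset (Fin n) → ℚ) :=
  (∑ x ∈ s, Pi.single x 1,
   fun A => if 2 ≤ A.card ∧ A.card ≤ n - 2 ∧ (s ∩ A).card = 1 then -1 else 0)

lemma pair_inter_card {n : ℕ} {i j : Fin n} (hij : i ≠ j) (A : Finset (Fin n)) :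
    (({i, j} : Finset (Fin n)) ∩ A).card = 1 ↔ ((i ∈ A ∧ j ∉ A) ∨ (j ∈ A ∧ i ∉ A)) := by
  by_cases hi : i ∈ A <;> by_cases hj : j ∈ A
  · have : ({i, j} : Finset (Fin n)) ∩ A = {i, j} := by
      apply Finset.inter_eq_left.mpr
      intro x hx
      rcases Finset.mem_insert.mp hx with rfl | hx
      · exact hi
      · rwa [Finset.mem_singleton.mp hx]
    rw [this, Finset.card_pair hij]
    simp [hi, hj]
  · have : ({i, j} : Finset (Fin n)) ∩ A = {i} := by
      ext x
      simp only [Finset.mem_inter, Finset.mem_insert, Finset.mem_singleton]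
      constructor
      · rintro ⟨rfl | rfl, hx⟩
        · rfl
        · exact absurd hx hj
      · rintro rfl; exact ⟨Or.inl rfl, hi⟩
    rw [this, Finset.card_singleton]
    simp [hi, hj]
  · have : ({i, j} : Finset (Fin n)) ∩ A = {j} := by
      ext x
      simp only [Finset.mem_inter, Finset.mem_insert, Finset.mem_singleton]
      constructor
      · rintro ⟨rfl | rfl, hx⟩
        · exact absurd hx hi
        · rfl
      · rintro rfl; exact ⟨Or.inr rfl, hj⟩
    rw [this, Finset.card_singleton]
    simp [hi, hj]
  · have : ({i, j} : Finset (Fin n)) ∩ A = ∅ := by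
      ext x
      simp only [Finset.mem_inter, Finset.mem_insert, Finset.mem_singleton, Finset.notMem_empty,
        iff_false, not_and]
      rintro (rfl | rfl) <;> assumption
    rw [this]
    simp [hi, hj]

lemma rVec_eq_rSet {n : ℕ} {i j : Fin n} (hij : i ≠ j) : rVec n i j = rSet n {i, j} := by
  unfold rVec rSet
  refine Prod.ext ?_ ?_
  · show Pi.single i 1 + Pi.single j 1 = _
    rw [Finset.sum_pair hij]
  · funext A
    show -sepIndicator n i j A =
      if 2 ≤ A.card ∧ A.card ≤ n - 2 ∧ (({i, j} : Finset (Fin n)) ∩ A).card = 1 then -1 else 0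
    rw [sepIndicator]
    by_cases h : 2 ≤ A.card ∧ A.card ≤ n - 2 ∧ ((i ∈ A ∧ j ∉ A) ∨ (j ∈ A ∧ i ∉ A))
    · rw [if_pos h, if_pos ⟨h.1, h.2.1, (pair_inter_card hij A).mpr h.2.2⟩]
    · rw [if_neg h, if_neg, neg_zero]
      rintro ⟨h1, h2, h3⟩
      exact h ⟨h1, h2, (pair_inter_card hij A).mp h3⟩

noncomputable def phi4 (n : ℕ) (s : Finset (Fin n)) :
    ((Fin n → ℚ) × (Finset (Fin n) → ℚ)) →ₗ[ℚ] ℚ where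
  toFun p := p.2 s + ∑ x ∈ s, p.1 x
  map_add' p q := by simp [Finset.sum_add_distrib]; ring
  map_smul' c p := by simp [← Finset.mul_sum]; ring

noncomputable def phi3 (n : ℕ) (s : Finset (Fin n)) :
    ((Fin n → ℚ) × (Finset (Fin n) → ℚ)) →ₗ[ℚ] ℚ where
  toFun p := ∑ x ∈ s, p.1 x - ∑ x ∈ sᶜ, p.1 x
  map_add' p q := by simp [Finset.sum_add_distrib]; ring
  map_smul' c p := by simp [← Finset.mul_sum]; ring

lemma sum_single_apply {n : ℕ} (t s : Finset (Fin n)) :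
    ∑ x ∈ s, (∑ y ∈ t, (Pi.single y (1:ℚ))) x = (s ∩ t).card := by
  have : ∀ x ∈ s, (∑ y ∈ t, (Pi.single y (1:ℚ))) x = if x ∈ t then 1 else 0 := by
    intro x _
    rw [Finset.sum_apply]
    rw [show (∑ y ∈ t, Pi.single y (1:ℚ) x) = ∑ y ∈ t, if x = y then 1 else 0 from
      Finset.sum_congr rfl fun y _ => Pi.single_apply y 1 x]
    rw [Finset.sum_ite_eq t x (fun _ => (1:ℚ))]
  rw [Finset.sum_congr rfl this, Finset.sum_ite_mem, Finset.sum_const]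
  simp

lemma inter_card_le {n : ℕ} {s t : Finset (Fin n)} (hs : s.card = 2) (ht : t.card = 2)
    (hne : s ≠ t) : (s ∩ t).card ≤ 1 := by
  by_contra h
  push_neg at h
  have hle : (s ∩ t).card ≤ s.card := Finset.card_le_card Finset.inter_subset_left
  have h1 : s ∩ t = s := Finset.eq_of_subset_of_card_le Finset.inter_subset_left (by omega)
  have h2 : s ∩ t = t := Finset.eq_of_subset_of_card_le Finset.inter_subset_right (by omega)
  exact hne (h1 ▸ h2)

lemma phi4_val {n : ℕ} (hn : 4 ≤ n) {s t : Finset (Fin n)} (hs : s.card = 2) (ht : t.card = 2) :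
    phi4 n s (rSet n t) = if s = t then 2 else 0 := by
  have hsum := sum_single_apply t s
  show (if 2 ≤ s.card ∧ s.card ≤ n - 2 ∧ (t ∩ s).card = 1 then (-1:ℚ) else 0) +
      (∑ x ∈ s, (∑ y ∈ t, (Pi.single y (1:ℚ))) x) = _
  rw [hsum]
  by_cases h : s = t
  · subst h
    rw [if_pos rfl, if_neg (by rintro ⟨-, -, hh⟩; rw [Finset.inter_self, hs] at hh; omega),
      Finset.inter_self, hs]
    norm_num
  · rw [if_neg h]
    have hle := inter_card_le hs ht h
    rcases Nat.lt_or_ge (s ∩ t).card 1 with h1 | h1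
    · rw [if_neg (by rintro ⟨-, -, hh⟩; rw [Finset.inter_comm] at hh; omega)]
      have : (s ∩ t).card = 0 := by omega
      rw [this]; norm_num
    · have h2 : (s ∩ t).card = 1 := by omega
      rw [if_pos ⟨by omega, by omega, by rw [Finset.inter_comm]; exact h2⟩, h2]
      norm_num

lemma phi3_val {n : ℕ} (hn : n = 3) {s t : Finset (Fin n)} (hs : s.card = 2) (ht : t.card = 2) :
    phi3 n s (rSet n t) = if s = t then 2 else 0 := by
  have hsum1 := sum_single_apply t s
  have hsum2 := sum_single_apply t sᶜ
  show (∑ x ∈ s, (∑ y ∈ t, (Pi.single y (1:ℚ))) x) -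
      (∑ x ∈ sᶜ, (∑ y ∈ t, (Pi.single y (1:ℚ))) x) = _
  rw [hsum1, hsum2]
  have hcompl : sᶜ ∩ t = t \ s := by
    ext x; simp [Finset.mem_sdiff, Finset.mem_compl, and_comm]
  have hcard : (t ∩ s).card + (t \ s).card = t.card := Finset.card_inter_add_card_sdiff t s
  rw [hcompl]
  by_cases h : s = t
  · subst h
    rw [if_pos rfl, Finset.inter_self]
    have : (s \ s).card = 0 := by simp
    rw [hs, this]; norm_num
  · rw [if_neg h]
    have hle := inter_card_le hs ht h
    have huniv : (s ∪ t).card ≤ 3 := by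
      have := Finset.card_le_univ (s ∪ t)
      simpa [hn] using this
    have hui : (s ∪ t).card + (s ∩ t).card = s.card + t.card :=
      Finset.card_union_add_card_inter s t
    have h1 : (s ∩ t).card = 1 := by omega
    have h2 : (t ∩ s).card = 1 := by rw [Finset.inter_comm]; exact h1
    have h3 : (t \ s).card = 1 := by omega
    rw [h1, h3]; norm_num

lemma indep_rSet {n : ℕ} (hn : 3 ≤ n) :
    LinearIndependent ℚ (fun s : {s : Finset (Fin n) // s.card = 2} => rSet n s.val) := by
  have hφ : ∃ φ : Finset (Fin n) → (((Fin n → ℚ) × (Finset (Fin n) → ℚ)) →ₗ[ℚ] ℚ),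
      ∀ s t : Finset (Fin n), s.card = 2 → t.card = 2 →
        φ s (rSet n t) = if s = t then 2 else 0 := by
    rcases eq_or_lt_of_le hn with h3 | h4
    · exact ⟨phi3 n, fun s t hs ht => phi3_val h3.symm hs ht⟩
    · exact ⟨phi4 n, fun s t hs ht => phi4_val h4 hs ht⟩
  obtain ⟨φ, hφ⟩ := hφ
  rw [Fintype.linearIndependent_iff]
  intro c hc s
  have h1 := congrArg (φ s.val) hc
  rw [map_sum, map_zero] at h1
  have h2 : ∀ t : {s : Finset (Fin n) // s.card = 2},
      φ s.val (c t • rSet n t.val) = if s = t then 2 * c t else 0 := by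
    intro t
    rw [map_smul, hφ s.val t.val s.prop t.prop, smul_eq_mul]
    by_cases h : s = t
    · subst h; rw [if_pos rfl, if_pos rfl]; ring
    · rw [if_neg (fun hh => h (Subtype.ext hh)), if_neg h, mul_zero]
  rw [Finset.sum_congr rfl (fun t _ => h2 t), Finset.sum_ite_eq Finset.univ s _] at h1
  simpa using h1

lemma span_eq_span (n : ℕ) :
    Submodule.span ℚ {v | ∃ i j : Fin n, i ≠ j ∧ v = rVec n i j} =
    Submodule.span ℚ (Set.range (fun s : {s : Finset (Fin n) // s.card = 2} => rSet n s.val)) := by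
  apply le_antisymm
  · rw [Submodule.span_le]
    rintro v ⟨i, j, hij, rfl⟩
    exact Submodule.subset_span ⟨⟨{i, j}, Finset.card_pair hij⟩, (rVec_eq_rSet hij).symm⟩
  · rw [Submodule.span_le]
    rintro v ⟨⟨s, hs⟩, rfl⟩
    obtain ⟨i, j, hij, rfl⟩ := Finset.card_eq_two.mp hs
    exact Submodule.subset_span ⟨i, j, hij, (rVec_eq_rSet hij).symm⟩

lemma card_pairs (n : ℕ) :
    Fintype.card {s : Finset (Fin n) // s.card = 2} = n * (n - 1) / 2 := by
  rw [Fintype.card_subtype]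
  have : Finset.univ.filter (fun s : Finset (Fin n) => s.card = 2) =
      Finset.powersetCard 2 Finset.univ := by
    rw [Finset.powersetCard_eq_filter, Finset.powerset_univ]
  rw [this, Finset.card_powersetCard, Finset.card_univ, Fintype.card_fin, Nat.choose_two_right]

lemma finrank_span (n : ℕ) (hn : 3 ≤ n) :
    Module.finrank ℚ (Submodule.span ℚ {v | ∃ i j : Fin n, i ≠ j ∧ v = rVec n i j}) =
      n * (n - 1) / 2 := by
  rw [span_eq_span, finrank_span_eq_card (indep_rSet hn), card_pairs]

lemma card_mem_zero (n : ℕ) [NeZero n] :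
    (Finset.univ.filter (fun A : Finset (Fin n) => (0:Fin n) ∈ A)).card = 2 ^ (n - 1) := by
  have key : (Finset.univ.filter (fun A : Finset (Fin n) => (0:Fin n) ∈ A)).card =
      ((Finset.univ.erase (0:Fin n)).powerset).card := by
    apply Finset.card_bij' (fun A _ => A.erase (0:Fin n)) (fun B _ => insert (0:Fin n) B)
    case hi =>
      intro A hA
      rw [Finset.mem_powerset]
      intro x hx
      rw [Finset.mem_erase] at hx ⊢
      exact ⟨hx.1, Finset.mem_univ x⟩
    case hj => intro B _; simp
    case left_inv =>
      intro A hA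
      rw [Finset.mem_filter] at hA
      exact Finset.insert_erase hA.2
    case right_inv =>
      intro B hB
      rw [Finset.mem_powerset] at hB
      refine Finset.erase_insert fun h0 => ?_
      have := hB h0
      simp at this
  rw [key, Finset.card_powerset, Finset.card_erase_of_mem (Finset.mem_univ _),
    Finset.card_univ, Fintype.card_fin]

lemma card_T (n : ℕ) [NeZero n] (hn : 3 ≤ n) :
    Fintype.card {A : Finset (Fin n) // (0:Fin n) ∈ A ∧ 2 ≤ A.card ∧ A.card ≤ n - 2} =
      2 ^ (n - 1) - (n + 1) := by
  rw [Fintype.card_subtype]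
  have hsplit := Finset.card_filter_add_card_filter_not
    (s := Finset.univ.filter (fun A : Finset (Fin n) => (0:Fin n) ∈ A))
    (p := fun A => 2 ≤ A.card ∧ A.card ≤ n - 2)
  rw [Finset.filter_filter, Finset.filter_filter, card_mem_zero] at hsplit
  have hbad : (Finset.univ.filter (fun A : Finset (Fin n) =>
      (0:Fin n) ∈ A ∧ ¬(2 ≤ A.card ∧ A.card ≤ n - 2))).card = n + 1 := by
    have hE : Finset.univ.filter (fun A : Finset (Fin n) =>
        (0:Fin n) ∈ A ∧ ¬(2 ≤ A.card ∧ A.card ≤ n - 2)) =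
        insert {(0:Fin n)} (insert Finset.univ
          ((Finset.univ.erase (0:Fin n)).image (fun x => ({x}ᶜ : Finset (Fin n))))) := by
      ext A
      simp only [Finset.mem_filter, Finset.mem_univ, true_and, Finset.mem_insert,
        Finset.mem_image, Finset.mem_erase]
      constructor
      · rintro ⟨h0, hbad⟩
        have hcle := card_le_n A
        have h1 : 1 ≤ A.card := Finset.card_pos.mpr ⟨0, h0⟩
        rcases Nat.lt_or_ge A.card 2 with hlt | hge
        · left
          have hc1 : A.card = 1 := by omega
          obtain ⟨a, ha⟩ := Finset.card_eq_one.mp hc1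
          rw [ha] at h0 ⊢
          rw [Finset.mem_singleton.mp h0]
        · have hgt : n - 2 < A.card := by by_contra hcon; exact hbad ⟨hge, by omega⟩
          rcases Nat.lt_or_ge A.card n with hltn | hgen
          · right; right
            have hcc : Aᶜ.card = 1 := by rw [Finset.card_compl, Fintype.card_fin]; omega
            obtain ⟨x, hx⟩ := Finset.card_eq_one.mp hcc
            refine ⟨x, ⟨?_, trivial⟩, ?_⟩
            · intro hx0
              subst hx0
              have : (0:Fin n) ∈ Aᶜ := by rw [hx]; exact Finset.mem_singleton_self _
              exact (Finset.mem_compl.mp this) h0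
            · rw [← compl_compl A, hx]
          · right; left
            exact Finset.eq_univ_of_card A (by rw [Fintype.card_fin]; omega)
      · rintro (rfl | rfl | ⟨x, ⟨hx0, -⟩, rfl⟩)
        · refine ⟨Finset.mem_singleton_self _, ?_⟩
          rw [Finset.card_singleton]; omega
        · refine ⟨Finset.mem_univ _, ?_⟩
          rw [Finset.card_univ, Fintype.card_fin]; omega
        · refine ⟨?_, ?_⟩
          · rw [Finset.mem_compl, Finset.mem_singleton]
            exact fun h => hx0 h.symm
          · rw [Finset.card_compl, Fintype.card_fin, Finset.card_singleton]; omega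
    rw [hE]
    rw [Finset.card_insert_of_notMem, Finset.card_insert_of_notMem, Finset.card_image_of_injOn,
      Finset.card_erase_of_mem (Finset.mem_univ _), Finset.card_univ, Fintype.card_fin]
    · omega
    · intro x _ y _ hxy
      have := congrArg (fun s => sᶜ) hxy
      simpa using this
    · intro hmem
      rw [Finset.mem_image] at hmem
      obtain ⟨x, -, hx⟩ := hmem
      have := congrArg Finset.card hx
      rw [Finset.card_compl, Fintype.card_fin, Finset.card_singleton, Finset.card_univ, Fintype.card_fin] at this
      omega
    · simp only [Finset.mem_insert, Finset.mem_image]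
      push_neg
      constructor
      · intro h
        have := congrArg Finset.card h
        rw [Finset.card_singleton, Finset.card_univ, Fintype.card_fin] at this
        omega
      · rintro x -
        intro h
        have := congrArg Finset.card h
        rw [Finset.card_compl, Fintype.card_fin, Finset.card_singleton, Finset.card_singleton] at this
        omega
  omega

noncomputable def toCoords (n : ℕ) [NeZero n] :
    ((Fin n → ℚ) × (Finset (Fin n) → ℚ)) →ₗ[ℚ]
      ((Fin n ⊕ {A : Finset (Fin n) // (0:Fin n) ∈ A ∧ 2 ≤ A.card ∧ A.card ≤ n - 2}) → ℚ) where
  toFun p := Sum.elim p.1 (fun A => p.2 A.val)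
  map_add' p q := by funext x; cases x <;> rfl
  map_smul' c p := by funext x; cases x <;> rfl

lemma two_pow_ge (m : ℕ) (h : 2 ≤ m) : m + 2 ≤ 2 ^ m := by
  induction m with
  | zero => omega
  | succ k ih =>
    rcases Nat.lt_or_ge k 2 with hk | hk
    · interval_cases k
      · omega
      · norm_num
    · have := ih hk
      rw [pow_succ]
      omega

lemma finrank_W (n : ℕ) [NeZero n] (hn : 3 ≤ n) :
    Module.finrank ℚ (Wsub n) = 2 ^ (n - 1) - 1 := by
  classical
  have hbij : Function.Bijective ((toCoords n).comp (Wsub n).subtype) := by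
    constructor
    · intro w₁ w₂ h
      apply Subtype.ext
      have hfst : w₁.val.1 = w₂.val.1 := funext fun i => congrFun h (Sum.inl i)
      have hT : ∀ A (hA : (0:Fin n) ∈ A ∧ 2 ≤ A.card ∧ A.card ≤ n - 2),
          w₁.val.2 A = w₂.val.2 A := fun A hA => congrFun h (Sum.inr ⟨A, hA⟩)
      have hsnd : w₁.val.2 = w₂.val.2 := by
        funext A
        by_cases hmid : 2 ≤ A.card ∧ A.card ≤ n - 2
        · by_cases h0 : (0:Fin n) ∈ A
          · exact hT A ⟨h0, hmid⟩
          · have h0c : (0:Fin n) ∈ Aᶜ := Finset.mem_compl.mpr h0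
            have hmidc : 2 ≤ Aᶜ.card ∧ Aᶜ.card ≤ n - 2 := by
              have := card_le_n A
              rw [Finset.card_compl, Fintype.card_fin]
              omega
            rw [w₁.prop.2 A, w₂.prop.2 A]
            exact hT Aᶜ ⟨h0c, hmidc⟩
        · have hbadA : A.card < 2 ∨ n - 2 < A.card := by
            by_contra hc
            push_neg at hc
            exact hmid ⟨by omega, by omega⟩
          rw [w₁.prop.1 A hbadA, w₂.prop.1 A hbadA]
      exact Prod.ext hfst hsnd
    · intro g
      refine ⟨⟨⟨fun i => g (Sum.inl i), fun A =>
        if hmid : 2 ≤ A.card ∧ A.card ≤ n - 2 then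
          (if h0 : (0:Fin n) ∈ A then g (Sum.inr ⟨A, h0, hmid⟩)
           else g (Sum.inr ⟨Aᶜ, Finset.mem_compl.mpr h0, by
             have := card_le_n A
             rw [Finset.card_compl, Fintype.card_fin]
             omega⟩))
        else 0⟩, ?_, ?_⟩, ?_⟩
      · intro A hA
        exact dif_neg (by omega)
      · intro A
        show (if _ : _ then _ else _) = (if _ : _ then _ else _)
        have hcompl := card_le_n A
        by_cases hmid : 2 ≤ A.card ∧ A.card ≤ n - 2
        · have hmidc : 2 ≤ Aᶜ.card ∧ Aᶜ.card ≤ n - 2 := by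
            rw [Finset.card_compl, Fintype.card_fin]
            omega
          by_cases h0 : (0:Fin n) ∈ A
          · have h0c : (0:Fin n) ∉ Aᶜ := by simp [h0]
            rw [dif_pos hmid, dif_pos hmidc, dif_pos h0, dif_neg h0c]
            exact congrArg (fun B => g (Sum.inr B)) (Subtype.ext (compl_compl A).symm)
          · have h0c : (0:Fin n) ∈ Aᶜ := Finset.mem_compl.mpr h0
            rw [dif_pos hmid, dif_pos hmidc, dif_neg h0, dif_pos h0c]
        · have hmidc : ¬(2 ≤ Aᶜ.card ∧ Aᶜ.card ≤ n - 2) := by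
            rw [Finset.card_compl, Fintype.card_fin]
            intro hc
            exact hmid ⟨by omega, by omega⟩
          rw [dif_neg hmid, dif_neg hmidc]
      · funext x
        rcases x with i | ⟨A, h0, hmid⟩
        · rfl
        · show (if _ : _ then _ else _) = _
          rw [dif_pos hmid, dif_pos h0]
  have e := LinearEquiv.ofBijective ((toCoords n).comp (Wsub n).subtype) hbij
  rw [e.finrank_eq, Module.finrank_pi, Fintype.card_sum, Fintype.card_fin, card_T n hn]
  have h1 : n + 1 ≤ 2 ^ (n - 1) := by
    have := two_pow_ge (n - 1) (by omega)
    omega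
  omega

set_option maxHeartbeats 1000000 in
set_option synthInstance.maxHeartbeats 400000 in
/-- For `n ≥ 3`: every `r_{ij}` (for `i ≠ j`) lies in `W`; the
dimension of `W` is `2^{n−1} − 1`; and the quotient of `W` by the span of the vectors
`r_{ij}` has dimension `2^{n−1} − n(n−1)/2 − 1` (the dimension of `H²(M̄_{0,n})`). -/
theorem Wsub_finrank_and_quotient (n : ℕ) (hn : 3 ≤ n) :
    (∀ i j : Fin n, i ≠ j → rVec n i j ∈ Wsub n) ∧
    Module.finrank ℚ (Wsub n) = 2 ^ (n - 1) - 1 ∧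
    Module.finrank ℚ
      (↥(Wsub n) ⧸ (Submodule.span ℚ
        {v | ∃ i j : Fin n, i ≠ j ∧ v = rVec n i j}).comap (Wsub n).subtype) =
      2 ^ (n - 1) - n * (n - 1) / 2 - 1 := by
  haveI : NeZero n := ⟨by omega⟩
  have hmem : ∀ i j : Fin n, rVec n i j ∈ Wsub n := fun i j => rVec_mem_aux n i j
  refine ⟨fun i j _ => hmem i j, finrank_W n hn, ?_⟩
  have hle : Submodule.span ℚ {v | ∃ i j : Fin n, i ≠ j ∧ v = rVec n i j} ≤ Wsub n := by
    rw [Submodule.span_le]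
    rintro v ⟨i, j, hij, rfl⟩
    exact hmem i j
  have e1 : Module.finrank ℚ
      ((Submodule.span ℚ {v | ∃ i j : Fin n, i ≠ j ∧ v = rVec n i j}).comap
        (Wsub n).subtype) = n * (n - 1) / 2 := by
    rw [(Submodule.comapSubtypeEquivOfLe hle).finrank_eq, finrank_span n hn]
  have e3 := Submodule.finrank_quotient_add_finrank
    ((Submodule.span ℚ {v | ∃ i j : Fin n, i ≠ j ∧ v = rVec n i j}).comap (Wsub n).subtype)
  rw [e1, finrank_W n hn] at e3
  have h1 : (1:ℕ) ≤ 2 ^ (n - 1) := Nat.one_le_two_pow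
  omega
end
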